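/- arXiv:2001.02735 — 7 statements merged into one kernel-verified Lean document; each statement's English description precedes it below -/
import Mathlib

section
/- Let δ < 0 and a := (1−δ)/2, let b : [0,∞) → ℝ be a continuous function, let s ≥ 0 and let z belong to the open upper half-plane ℍ := {w ∈ ℂ : Im w > 0}. Then there exists a unique continuous function H : [s,∞) → ℂ satisfying H_t = z + (b_t − b_s) − a ∫_s^t (1/H_r) dr for all t ≥ s; moreover H_t ∈ ℍ for all t ≥ s and the function t ↦ Im H_t is strictly increasing on [s,∞). -/
open MeasureTheory Set
open scoped Topology

noncomputable section

namespace CBesselAux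

/-- Truncation of `w` to the region `{im ≥ c}`. -/
def pc (c : ℝ) (w : ℂ) : ℂ := ⟨w.re, max w.im c⟩

/-- Truncated inversion. -/
def gc (c : ℝ) (w : ℂ) : ℂ := (pc c w)⁻¹

variable {c : ℝ} (hc : 0 < c)

lemma pc_im (w : ℂ) : (pc c w).im = max w.im c := rfl
lemma pc_re (w : ℂ) : (pc c w).re = w.re := rfl

include hc

lemma c_le_abs_pc (w : ℂ) : c ≤ ‖pc c w‖ := by
  have h1 : c ≤ (pc c w).im := le_max_right _ _
  exact le_trans (h1.trans (le_abs_self _)) (Complex.abs_im_le_norm _)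

lemma pc_ne (w : ℂ) : pc c w ≠ 0 := by
  intro h
  have h1 : c ≤ (pc c w).im := le_max_right _ _
  rw [h] at h1
  simp only [Complex.zero_im] at h1
  linarith

lemma norm_gc_le (w : ℂ) : ‖gc c w‖ ≤ c⁻¹ := by
  rw [gc, norm_inv]
  exact inv_anti₀ hc (c_le_abs_pc hc w)

lemma gc_im_neg (w : ℂ) : (gc c w).im < 0 := by
  rw [gc, Complex.inv_im]
  apply div_neg_of_neg_of_pos
  · have : c ≤ (pc c w).im := le_max_right _ _
    linarith
  · exact Complex.normSq_pos.2 (pc_ne hc w)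

omit hc in
lemma dist_pc_le (w w' : ℂ) : dist (pc c w) (pc c w') ≤ dist w w' := by
  rw [Complex.dist_eq_re_im, Complex.dist_eq_re_im]
  apply Real.sqrt_le_sqrt
  have h1 : ((pc c w).im - (pc c w').im) ^ 2 ≤ (w.im - w'.im) ^ 2 := by
    have h2 : |max w.im c - max w'.im c| ≤ |w.im - w'.im| := abs_max_sub_max_le_abs _ _ _
    calc ((pc c w).im - (pc c w').im) ^ 2 = |max w.im c - max w'.im c| ^ 2 := by
          rw [sq_abs]; rfl
      _ ≤ |w.im - w'.im| ^ 2 := by gcongr <;> positivity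
      _ = (w.im - w'.im) ^ 2 := sq_abs _
  have h0 : (pc c w).re - (pc c w').re = w.re - w'.re := rfl
  rw [h0]
  linarith

lemma dist_inv_le {u v : ℂ} (hu : c ≤ u.im) (hv : c ≤ v.im) :
    dist u⁻¹ v⁻¹ ≤ c⁻¹ * c⁻¹ * dist u v := by
  have hu0 : u ≠ 0 := by
    intro h; rw [h] at hu; simp only [Complex.zero_im] at hu; linarith
  have hv0 : v ≠ 0 := by
    intro h; rw [h] at hv; simp only [Complex.zero_im] at hv; linarith
  have hcu : c ≤ ‖u‖ := le_trans (hu.trans (le_abs_self _)) (Complex.abs_im_le_norm u)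
  have hcv : c ≤ ‖v‖ := le_trans (hv.trans (le_abs_self _)) (Complex.abs_im_le_norm v)
  have key : u⁻¹ - v⁻¹ = (v - u) * u⁻¹ * v⁻¹ := by
    field_simp
  rw [Complex.dist_eq, Complex.dist_eq, key]
  rw [norm_mul, norm_mul, norm_inv, norm_inv]
  have h1 : (‖u‖)⁻¹ ≤ c⁻¹ := inv_anti₀ hc hcu
  have h2 : (‖v‖)⁻¹ ≤ c⁻¹ := inv_anti₀ hc hcv
  have h3 : ‖v - u‖ = ‖u - v‖ := by
    rw [show v - u = -(u - v) by ring, norm_neg]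
  rw [h3]
  have hnn : (0:ℝ) ≤ ‖u - v‖ := norm_nonneg _
  calc ‖u - v‖ * (‖u‖)⁻¹ * (‖v‖)⁻¹
      ≤ ‖u - v‖ * c⁻¹ * c⁻¹ := by
        gcongr <;> positivity
    _ = c⁻¹ * c⁻¹ * ‖u - v‖ := by ring

lemma dist_gc_le (w w' : ℂ) : dist (gc c w) (gc c w') ≤ c⁻¹ * c⁻¹ * dist w w' := by
  calc dist (gc c w) (gc c w')
      ≤ c⁻¹ * c⁻¹ * dist (pc c w) (pc c w') :=
        dist_inv_le hc (le_max_right _ _) (le_max_right _ _)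
    _ ≤ c⁻¹ * c⁻¹ * dist w w' := by
        have h4 := dist_pc_le (c := c) w w'
        have h0 : (0:ℝ) ≤ c⁻¹ * c⁻¹ := by positivity
        exact mul_le_mul_of_nonneg_left h4 h0

lemma lip_gc : LipschitzWith (Real.toNNReal (c⁻¹ * c⁻¹)) (gc c) := by
  apply LipschitzWith.of_dist_le_mul
  intro x y
  rw [Real.coe_toNNReal _ (by positivity)]
  exact dist_gc_le hc x y

lemma cont_gc : Continuous (gc c) := (lip_gc hc).continuous

omit hc in
lemma gc_eq {w : ℂ} (h : c ≤ w.im) : gc c w = w⁻¹ := by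
  have : pc c w = w := by
    apply Complex.ext
    · rfl
    · exact max_eq_left h
  rw [gc, this]

section Main

variable {a s : ℝ} {z : ℂ} {b : ℝ → ℝ}

/-- The driver increment, as a complex number. -/
def beta (b : ℝ → ℝ) (s t : ℝ) : ℂ := (b t : ℂ) - (b s : ℂ)

/-- Solution of the truncated integral equation on `Icc s T`. -/
def ModOn (a : ℝ) (b : ℝ → ℝ) (s : ℝ) (z : ℂ) (c T : ℝ) (H : ℝ → ℂ) : Prop :=
  ContinuousOn H (Icc s T) ∧
  ∀ t ∈ Icc s T, H t = z + beta b s t - (a : ℂ) * ∫ r in s..t, gc c (H r)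

/-- The associated vector field. -/
def vf (a c : ℝ) (b : ℝ → ℝ) (s t : ℝ) (x : ℂ) : ℂ := -(a : ℂ) * gc c (x + beta b s t)

omit hc in
lemma modOn_mono {T T' : ℝ} {H : ℝ → ℂ} (h : ModOn a b s z c T H) (h1 : T' ≤ T) :
    ModOn a b s z c T' H :=
  ⟨h.1.mono (Icc_subset_Icc_right h1), fun t ht => h.2 t ⟨ht.1, ht.2.trans h1⟩⟩

omit hc in
lemma modOn_apply_s {T : ℝ} {H : ℝ → ℂ} (hT : s ≤ T) (h : ModOn a b s z c T H) : H s = z := by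
  have h2 := h.2 s ⟨le_refl s, hT⟩
  simpa [beta, intervalIntegral.integral_same] using h2

lemma lip_vf (ha0 : 0 ≤ a) (t : ℝ) :
    LipschitzWith (Real.toNNReal (a * (c⁻¹ * c⁻¹))) (vf a c b s t) := by
  apply LipschitzWith.of_dist_le_mul
  intro x y
  rw [Real.coe_toNNReal _ (mul_nonneg ha0 (by positivity))]
  have h1 : dist (vf a c b s t x) (vf a c b s t y)
      = a * dist (gc c (x + beta b s t)) (gc c (y + beta b s t)) := by
    rw [dist_eq_norm, dist_eq_norm, vf, vf,
      show -(a:ℂ) * gc c (x + beta b s t) - -(a:ℂ) * gc c (y + beta b s t)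
        = (-(a:ℂ)) * (gc c (x + beta b s t) - gc c (y + beta b s t)) by ring,
      norm_mul, norm_neg, Complex.norm_real, Real.norm_eq_abs, abs_of_nonneg ha0]
  rw [h1]
  have h2 := (lip_gc hc).dist_le_mul (x + beta b s t) (y + beta b s t)
  rw [Real.coe_toNNReal _ (by positivity), dist_add_right] at h2
  calc a * dist (gc c (x + beta b s t)) (gc c (y + beta b s t))
      ≤ a * (c⁻¹ * c⁻¹ * dist x y) := by exact mul_le_mul_of_nonneg_left h2 ha0
    _ = a * (c⁻¹ * c⁻¹) * dist x y := by ring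

omit hc in
lemma beta_contOn (hb : ContinuousOn b (Ici 0)) : ContinuousOn (beta b s) (Ici 0) :=
  (Complex.continuous_ofReal.comp_continuousOn hb).sub continuousOn_const

/-- Uniqueness for the truncated equation. -/
lemma modOn_unique (ha0 : 0 ≤ a) (hb : ContinuousOn b (Ici 0)) (hs : 0 ≤ s)
    {T : ℝ} (hT : s ≤ T) {H H' : ℝ → ℂ}
    (hH : ModOn a b s z c T H) (hH' : ModOn a b s z c T H') : EqOn H H' (Icc s T) := by
  set σ : ℝ → ℝ := fun t => max s (min t T) with hσ
  have hσcont : Continuous σ := continuous_const.max (continuous_id.min continuous_const)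
  have hσmem : ∀ t, σ t ∈ Icc s T := fun t => ⟨le_max_left _ _, max_le hT (min_le_right _ _)⟩
  have hσid : ∀ t ∈ Icc s T, σ t = t := by
    intro t ht
    rw [hσ]
    simp only
    rw [min_eq_left ht.2, max_eq_right ht.1]
  have key : ∀ G : ℝ → ℂ, ModOn a b s z c T G →
      Continuous (fun t => G (σ t) - beta b s (σ t)) ∧
      (G (σ s) - beta b s (σ s) = z) ∧
      ∀ t ∈ Ico s T, HasDerivWithinAt (fun u => G (σ u) - beta b s (σ u))
        (vf a c b s t (G (σ t) - beta b s (σ t))) (Ici t) t := by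
    intro G hG
    have hGc : Continuous fun t => G (σ t) := hG.1.comp_continuous hσcont hσmem
    have hβc : Continuous fun t => beta b s (σ t) :=
      (beta_contOn hb).comp_continuous hσcont (fun t => hs.trans (hσmem t).1)
    have hσs : σ s = s := hσid s ⟨le_refl s, hT⟩
    refine ⟨hGc.sub hβc, ?_, ?_⟩
    · rw [hσs, modOn_apply_s hT hG]
      simp [beta]
    intro t ht
    have htmem : t ∈ Icc s T := ⟨ht.1, ht.2.le⟩
    set F : ℝ → ℂ := fun u => z - (a:ℂ) * ∫ r in s..u, gc c (G (σ r)) with hF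
    have hint : Continuous fun r => gc c (G (σ r)) := (cont_gc hc).comp hGc
    have hI : HasDerivWithinAt (fun u => ∫ r in s..u, gc c (G (σ r)))
        (gc c (G (σ t))) (Ici t) t := by
      exact intervalIntegral.integral_hasDerivWithinAt_right (t := Set.Ioi t)
        (hint.intervalIntegrable s t)
        ⟨univ, Filter.univ_mem, hint.aestronglyMeasurable⟩
        hint.continuousWithinAt
    have hFd : HasDerivWithinAt F (-(a:ℂ) * gc c (G (σ t))) (Ici t) t := by
      have h3 := (hI.const_mul ((a:ℂ))).const_sub z
      simpa [neg_mul] using h3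
    have hmem : Icc s T ∈ 𝓝[Ici t] t := by
      refine mem_nhdsWithin.2 ⟨Iio T, isOpen_Iio, ht.2, ?_⟩
      rintro r ⟨hr1, hr2⟩
      exact ⟨le_trans ht.1 hr2, le_of_lt hr1⟩
    have heq : ∀ u ∈ Icc s T, G (σ u) - beta b s (σ u) = F u := by
      intro u hu
      rw [hσid u hu, hG.2 u hu]
      have h4 : (∫ r in s..u, gc c (G r)) = ∫ r in s..u, gc c (G (σ r)) := by
        apply intervalIntegral.integral_congr
        intro r hr
        rw [uIcc_of_le hu.1] at hr
        show gc c (G r) = gc c (G (σ r))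
        rw [hσid r ⟨hr.1, hr.2.trans hu.2⟩]
      rw [hF]
      simp only
      rw [← h4]
      ring
    have hfeq : (fun u => G (σ u) - beta b s (σ u)) =ᶠ[𝓝[Ici t] t] F :=
      Filter.eventuallyEq_of_mem hmem heq
    have hfinal := hFd.congr_of_eventuallyEq hfeq (heq t htmem)
    convert hfinal using 1
    · rfl
    rw [vf, hσid t htmem]
    congr 2
    ring
  obtain ⟨hf1, hf2, hf3⟩ := key H hH
  obtain ⟨hg1, hg2, hg3⟩ := key H' hH'
  have huniq : EqOn (fun u => H (σ u) - beta b s (σ u)) (fun u => H' (σ u) - beta b s (σ u))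
      (Icc s T) := by
    refine ODE_solution_unique_of_mem_Icc_right
      (v := vf a c b s) (s := fun _ => (univ : Set ℂ)) (K := Real.toNNReal (a * (c⁻¹ * c⁻¹)))
      (fun t _ => (lip_vf hc ha0 t).lipschitzOnWith)
      hf1.continuousOn hf3 (fun _ _ => trivial)
      hg1.continuousOn hg3 (fun _ _ => trivial) (hf2.trans hg2.symm)
  intro t ht
  have h5 := huniq ht
  simp only [hσid t ht] at h5
  exact sub_left_injective h5

/-- Existence for the truncated equation on `Icc s (s+n)`. -/
lemma modOn_exists (ha0 : 0 ≤ a) (hb : ContinuousOn b (Ici 0)) (hs : 0 ≤ s) (n : ℕ) :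
    ∃ H : ℝ → ℂ, ModOn a b s z c (s + n) H := by
  have hβ : ContinuousOn (beta b s) (Icc s (s + n)) :=
    (beta_contOn hb).mono (fun r hr => hs.trans hr.1)
  have hpl : IsPicardLindelof (vf a c b s)
      (⟨s, le_refl s, le_add_of_nonneg_right n.cast_nonneg⟩ : Icc s (s + (n : ℝ))) z
      (Real.toNNReal (a * c⁻¹ * n + 1)) 0 (Real.toNNReal (a * c⁻¹))
      (Real.toNNReal (a * (c⁻¹ * c⁻¹))) := by
    constructor
    · intro t _
      exact (lip_vf hc ha0 t).lipschitzOnWith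
    · intro x _
      have : ContinuousOn (fun t : ℝ => x + beta b s t) (Icc s (s + n)) :=
        continuousOn_const.add hβ
      exact continuousOn_const.mul ((cont_gc hc).comp_continuousOn this)
    · intro t _ x _
      rw [Real.coe_toNNReal _ (by positivity)]
      rw [vf, norm_mul, norm_neg, Complex.norm_real, Real.norm_eq_abs, abs_of_nonneg ha0]
      exact mul_le_mul_of_nonneg_left (norm_gc_le hc _) ha0
    · have h1 : max (s + n - s) (s - s) = (n : ℝ) := by
        rw [add_sub_cancel_left, sub_self]
        exact max_eq_left n.cast_nonneg
      have : (0:ℝ) ≤ a * c⁻¹ * n := by positivity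
      rw [NNReal.coe_zero, sub_zero, Real.coe_toNNReal _ (by positivity),
        Real.coe_toNNReal _ (by positivity)]
      show a * c⁻¹ * max (s + n - s) (s - s) ≤ _
      rw [h1]
      linarith
  obtain ⟨K, hKs, hKd⟩ := hpl.exists_eq_forall_mem_Icc_hasDerivWithinAt₀
  have hKs : K s = z := hKs
  have hKc : ContinuousOn K (Icc s (s + n)) := fun t ht => (hKd t ht).continuousWithinAt
  refine ⟨fun t => K t + beta b s t, hKc.add hβ, ?_⟩
  intro t ht
  have hst : s ≤ t := ht.1
  have hKic : ContinuousOn (fun r => vf a c b s r (K r)) (Icc s t) := by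
    have h2 : ContinuousOn (fun r : ℝ => K r + beta b s r) (Icc s t) :=
      (hKc.add hβ).mono (Icc_subset_Icc_right ht.2)
    exact continuousOn_const.mul ((cont_gc hc).comp_continuousOn h2)
  have hderiv : ∀ x ∈ Ioo s t, HasDerivWithinAt K (vf a c b s x (K x)) (Ioi x) x := by
    intro x hx
    have hmem : Icc s (s + n) ∈ 𝓝[Ioi x] x := by
      refine mem_nhdsWithin.2 ⟨Iio (s + n), isOpen_Iio, lt_of_lt_of_le hx.2 ht.2, ?_⟩
      rintro r ⟨hr1, hr2⟩
      exact ⟨(hx.1.trans hr2).le, hr1.le⟩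
    exact (hKd x ⟨hx.1.le, hx.2.le.trans ht.2⟩).mono_of_mem_nhdsWithin hmem
  have hftc := intervalIntegral.integral_eq_sub_of_hasDeriv_right_of_le hst
    (hKc.mono (Icc_subset_Icc_right ht.2)) hderiv
    (hKic.intervalIntegrable_of_Icc hst)
  -- hftc : ∫ r in s..t, vf a c b s r (K r) = K t - K s
  have hmul : (∫ r in s..t, vf a c b s r (K r))
      = -(a:ℂ) * ∫ r in s..t, gc c ((fun u => K u + beta b s u) r) := by
    rw [← intervalIntegral.integral_const_mul]
    rfl
  rw [hmul, hKs] at hftc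
  show K t + beta b s t = z + beta b s t - (a:ℂ) * ∫ r in s..t, gc c (K r + beta b s r)
  simp only at hftc
  have h9 : K t = z + -(a:ℂ) * ∫ r in s..t, gc c (K r + beta b s r) := by
    rw [hftc]; ring
  rw [h9]; ring

/-- For truncated solutions the imaginary part stays `≥ c` and strictly increases. -/
lemma modOn_im (ha0 : 0 < a) (hzc : z.im = c) {T : ℝ} {H : ℝ → ℂ}
    (hmod : ModOn a b s z c T H) :
    (∀ t ∈ Icc s T, c ≤ (H t).im) ∧
    (∀ u ∈ Icc s T, ∀ t ∈ Icc s T, u < t → (H u).im < (H t).im) := by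
  have hgint : ∀ u ∈ Icc s T, ∀ t ∈ Icc s T, u ≤ t →
      IntervalIntegrable (fun r => (gc c (H r)).im) volume u t := by
    intro u hu t htt hut
    apply ContinuousOn.intervalIntegrable
    rw [uIcc_of_le hut]
    exact Complex.continuous_im.comp_continuousOn
      ((cont_gc hc).comp_continuousOn (hmod.1.mono (Icc_subset_Icc hu.1 htt.2)))
  have hgintC : ∀ t ∈ Icc s T, IntervalIntegrable (fun r => gc c (H r)) volume s t := by
    intro t htt
    apply ContinuousOn.intervalIntegrable
    rw [uIcc_of_le htt.1]
    exact (cont_gc hc).comp_continuousOn (hmod.1.mono (Icc_subset_Icc_right htt.2))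
  have formula : ∀ t ∈ Icc s T, (H t).im = c - a * ∫ r in s..t, (gc c (H r)).im := by
    intro t htt
    rw [hmod.2 t htt]
    have him : (∫ r in s..t, gc c (H r)).im = ∫ r in s..t, (gc c (H r)).im := by
      have h2 := Complex.imCLM.intervalIntegral_comp_comm (hgintC t htt)
      simpa [Complex.imCLM_apply] using h2.symm
    simp [beta, Complex.add_im, Complex.sub_im, Complex.im_ofReal_mul, him, hzc]
  have hint_le : ∀ t ∈ Icc s T, (∫ r in s..t, (gc c (H r)).im) ≤ 0 := by
    intro t htt
    have h0 : (0:ℝ) ≤ ∫ r in s..t, (-(gc c (H r)).im) := by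
      apply intervalIntegral.integral_nonneg htt.1
      intro x _
      have h3 := gc_im_neg hc (H x)
      linarith
    rw [intervalIntegral.integral_neg] at h0
    linarith
  constructor
  · intro t htt
    rw [formula t htt]
    have h4 := hint_le t htt
    nlinarith
  · intro u hu t htt hut
    rw [formula u hu, formula t htt]
    have hsplit : (∫ r in s..u, (gc c (H r)).im) + (∫ r in u..t, (gc c (H r)).im)
        = ∫ r in s..t, (gc c (H r)).im :=
      intervalIntegral.integral_add_adjacent_intervals
        (hgint s ⟨le_refl s, le_trans hu.1 hu.2⟩ u hu hu.1) (hgint u hu t htt hut.le)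
    have hpos : 0 < ∫ r in u..t, (-(gc c (H r)).im) := by
      apply intervalIntegral.intervalIntegral_pos_of_pos_on
      · exact (hgint u hu t htt hut.le).neg
      · intro x _
        have h5 := gc_im_neg hc (H x)
        linarith
      · exact hut
    rw [intervalIntegral.integral_neg] at hpos
    nlinarith

/-- Any solution of the original equation keeps its imaginary part `≥ c = z.im`. -/
lemma flow_im (hzc : z.im = c) (ha0 : 0 < a) {H : ℝ → ℂ} (hcont : ContinuousOn H (Ici s))
    (heqn : ∀ t ∈ Ici s, H t = z + ((b t : ℂ) - (b s : ℂ)) - (a : ℂ) * ∫ r in s..t, (H r)⁻¹) :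
    ∀ t ∈ Ici s, c ≤ (H t).im := by
  have hHs : H s = z := by
    have h1 := heqn s (le_refl s)
    simpa [intervalIntegral.integral_same] using h1
  have formula : ∀ t ∈ Ici s, (∀ r ∈ Icc s t, 0 < (H r).im) → c ≤ (H t).im := by
    intro t ht hpos
    have hne : ∀ r ∈ Icc s t, H r ≠ 0 := by
      intro r hr h0
      have h2 := hpos r hr
      rw [h0] at h2
      simp at h2
    have hcont' : ContinuousOn (fun r => (H r)⁻¹) (Icc s t) :=
      (hcont.mono Icc_subset_Ici_self).inv₀ hne
    have hint : IntervalIntegrable (fun r => (H r)⁻¹) volume s t :=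
      hcont'.intervalIntegrable_of_Icc ht
    have him : (H t).im = c - a * ∫ r in s..t, ((H r)⁻¹).im := by
      rw [heqn t ht]
      have h1 : (∫ r in s..t, (H r)⁻¹).im = ∫ r in s..t, ((H r)⁻¹).im := by
        have h2 := Complex.imCLM.intervalIntegral_comp_comm hint
        simpa [Complex.imCLM_apply] using h2.symm
      simp [Complex.add_im, Complex.sub_im, Complex.im_ofReal_mul, h1, hzc]
    have hle : (∫ r in s..t, ((H r)⁻¹).im) ≤ 0 := by
      have h0 : (0:ℝ) ≤ ∫ r in s..t, (-((H r)⁻¹).im) := by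
        apply intervalIntegral.integral_nonneg ht
        intro x hx
        rw [Complex.inv_im]
        have h3 := hpos x hx
        have h4 : 0 < Complex.normSq (H x) := Complex.normSq_pos.2 (hne x hx)
        rw [neg_div, neg_neg]
        positivity
      rw [intervalIntegral.integral_neg] at h0
      linarith
    rw [him]
    nlinarith
  intro t ht
  by_cases hB : ∃ r ∈ Icc s t, (H r).im ≤ c / 2
  · exfalso
    set B := {r | r ∈ Icc s t ∧ (H r).im ≤ c / 2} with hBdef
    have hBne : B.Nonempty := by
      obtain ⟨r, hr1, hr2⟩ := hB
      exact ⟨r, hr1, hr2⟩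
    have hBclosed : IsClosed B := by
      have h5 : ContinuousOn (fun r => (H r).im) (Icc s t) :=
        Complex.continuous_im.comp_continuousOn (hcont.mono Icc_subset_Ici_self)
      have h6 := h5.preimage_isClosed_of_isClosed isClosed_Icc (isClosed_Iic (a := c / 2))
      convert h6 using 1
      rw [hBdef]; rfl
    have hBbdd : BddBelow B := ⟨s, fun r hr => hr.1.1⟩
    have huB : sInf B ∈ B := hBclosed.csInf_mem hBne hBbdd
    set u := sInf B with hu
    have hsu : s < u := by
      rcases lt_or_eq_of_le huB.1.1 with h | h
      · exact h
      · exfalso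
        have h7 := huB.2
        rw [← h, hHs, hzc] at h7
        linarith
    have hlt : ∀ r ∈ Ico s u, c ≤ (H r).im := by
      intro r hr
      apply formula r hr.1
      intro x hx
      have hxt : x ∈ Icc s t := ⟨hx.1, le_trans (hx.2.trans hr.2.le) huB.1.2⟩
      have hxB : x ∉ B := fun hmem => not_lt.2 (csInf_le hBbdd hmem) (lt_of_le_of_lt hx.2 hr.2)
      have h8 : ¬ (H x).im ≤ c / 2 := fun hle => hxB ⟨hxt, hle⟩
      linarith
    have hculim : c ≤ (H u).im := by
      have hcw : ContinuousWithinAt (fun r => (H r).im) (Ico s u) u := by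
        have h6 : ContinuousWithinAt (fun r => (H r).im) (Ici s) u :=
          (Complex.continuous_im.comp_continuousOn hcont) u hsu.le
        exact h6.mono (fun r hr => hr.1)
      have hne2 : (𝓝[Ico s u] u).NeBot := by
        rw [← mem_closure_iff_nhdsWithin_neBot, closure_Ico hsu.ne]
        exact right_mem_Icc.2 hsu.le
      exact ge_of_tendsto hcw (Filter.eventually_of_mem self_mem_nhdsWithin hlt)
    have h9 := huB.2
    linarith
  · push_neg at hB
    apply formula t ht
    intro r hr
    have h10 := hB r hr
    linarith

end Main

end CBesselAux

/-- `H` is a continuous solution on `[s,∞)` of the integrated complex Bessel equation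
`H_t = z + (b_t − b_s) − a ∫_s^t (1/H_r) dr`. -/
def IsCBesselFlow (a : ℝ) (b : ℝ → ℝ) (s : ℝ) (z : ℂ) (H : ℝ → ℂ) : Prop :=
  ContinuousOn H (Set.Ici s) ∧
    ∀ t ∈ Set.Ici s, H t = z + ((b t : ℂ) - (b s : ℂ)) - (a : ℂ) * ∫ r in s..t, (H r)⁻¹

/-- For `δ < 0`, `a = (1−δ)/2`, a continuous driver `b`, `s ≥ 0` and `z` in the open upper
half-plane, there exists a unique continuous solution `H` on `[s,∞)` of the complex Bessel
equation; moreover `H` stays in the upper half-plane and `t ↦ Im H_t` is strictly increasing. -/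
theorem complex_bessel_flow_exists_unique
    (δ : ℝ) (hδ : δ < 0) (a : ℝ) (ha : a = (1 - δ) / 2)
    (b : ℝ → ℝ) (hb : ContinuousOn b (Set.Ici (0 : ℝ)))
    (s : ℝ) (hs : 0 ≤ s) (z : ℂ) (hz : 0 < z.im) :
    ∃ H : ℝ → ℂ, IsCBesselFlow a b s z H ∧
      (∀ t ∈ Set.Ici s, 0 < (H t).im) ∧
      StrictMonoOn (fun t => (H t).im) (Set.Ici s) ∧
      ∀ H' : ℝ → ℂ, IsCBesselFlow a b s z H' → ∀ t ∈ Set.Ici s, H' t = H t := by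
  classical
  open CBesselAux in
  set c := z.im with hzc0
  have hc : 0 < c := hz
  have ha0 : 0 < a := by rw [ha]; linarith
  have hex : ∀ n : ℕ, ∃ H : ℝ → ℂ, CBesselAux.ModOn a b s z c (s + n) H :=
    fun n => CBesselAux.modOn_exists hc ha0.le hb hs n
  choose sol hsol using hex
  set H : ℝ → ℂ := fun t => sol ⌈t - s⌉₊ t with hHdef
  have hglue : ∀ n : ℕ, ∀ t ∈ Set.Icc s (s + (n : ℝ)), H t = sol n t := by
    intro n t ht
    set m : ℕ := ⌈t - s⌉₊ with hm
    have htm : t ≤ s + (m : ℝ) := by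
      have h1 := Nat.le_ceil (t - s)
      rw [← hm] at h1
      linarith
    have hminT : s ≤ s + ((min m n : ℕ) : ℝ) :=
      le_add_of_nonneg_right (Nat.cast_nonneg _)
    have hmin : t ∈ Set.Icc s (s + ((min m n : ℕ) : ℝ)) := by
      refine ⟨ht.1, ?_⟩
      rw [Nat.cast_min]
      have h2 : t - s ≤ min (m : ℝ) (n : ℝ) := le_min (by linarith) (by linarith [ht.2])
      linarith
    have h1 := CBesselAux.modOn_mono (T' := s + ((min m n : ℕ) : ℝ)) (hsol m)
      (by rw [Nat.cast_min]; linarith [min_le_left (m : ℝ) (n : ℝ)])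
    have h2 := CBesselAux.modOn_mono (T' := s + ((min m n : ℕ) : ℝ)) (hsol n)
      (by rw [Nat.cast_min]; linarith [min_le_right (m : ℝ) (n : ℝ)])
    exact CBesselAux.modOn_unique hc ha0.le hb hs hminT h1 h2 hmin
  have hHcont : ContinuousOn H (Set.Ici s) := by
    intro t ht
    set n : ℕ := ⌈t - s⌉₊ + 1 with hn
    have htn : t < s + (n : ℝ) := by
      have h1 := Nat.le_ceil (t - s)
      have h2 : ((⌈t - s⌉₊ : ℝ)) + 1 = (n : ℝ) := by rw [hn]; push_cast; ring
      linarith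
    have hmem : Set.Icc s (s + (n : ℝ)) ∈ nhdsWithin t (Set.Ici s) :=
      mem_nhdsWithin.2 ⟨Set.Iio (s + (n : ℝ)), isOpen_Iio, htn,
        fun r hr => ⟨hr.2, hr.1.le⟩⟩
    have hcw : ContinuousWithinAt (sol n) (Set.Ici s) t :=
      ((hsol n).1 t ⟨ht, htn.le⟩).mono_of_mem_nhdsWithin hmem
    exact hcw.congr_of_eventuallyEq
      (Filter.eventuallyEq_of_mem hmem (fun r hr => hglue n r hr)) (hglue n t ⟨ht, htn.le⟩)
  have hHeqn : ∀ t ∈ Set.Ici s,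
      H t = z + CBesselAux.beta b s t - (a : ℂ) * ∫ r in s..t, CBesselAux.gc c (H r) := by
    intro t ht
    set n : ℕ := ⌈t - s⌉₊ with hn
    have htn : t ≤ s + (n : ℝ) := by
      have h1 := Nat.le_ceil (t - s)
      rw [← hn] at h1
      linarith
    have h1 := (hsol n).2 t ⟨ht, htn⟩
    have h2 : (∫ r in s..t, CBesselAux.gc c (sol n r)) = ∫ r in s..t, CBesselAux.gc c (H r) := by
      apply intervalIntegral.integral_congr
      intro r hr
      rw [uIcc_of_le ht] at hr
      show CBesselAux.gc c (sol n r) = CBesselAux.gc c (H r)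
      rw [hglue n r ⟨hr.1, hr.2.trans htn⟩]
    rw [hglue n t ⟨ht, htn⟩, h1, h2]
  have hmodT : ∀ t ∈ Set.Ici s, CBesselAux.ModOn a b s z c t H := fun t _ =>
    ⟨hHcont.mono Set.Icc_subset_Ici_self, fun u hu => hHeqn u hu.1⟩
  have hIm : ∀ t ∈ Set.Ici s, c ≤ (H t).im := fun t ht =>
    (CBesselAux.modOn_im hc ha0 hzc0.symm (hmodT t ht)).1 t ⟨ht, le_refl t⟩
  have hflow : IsCBesselFlow a b s z H := by
    refine ⟨hHcont, ?_⟩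
    intro t ht
    rw [hHeqn t ht]
    have h3 : (∫ r in s..t, CBesselAux.gc c (H r)) = ∫ r in s..t, (H r)⁻¹ := by
      apply intervalIntegral.integral_congr
      intro r hr
      rw [uIcc_of_le ht] at hr
      show CBesselAux.gc c (H r) = (H r)⁻¹
      exact CBesselAux.gc_eq (hIm r hr.1)
    rw [h3]
    rfl
  refine ⟨H, hflow, ?_, ?_, ?_⟩
  · exact fun t ht => lt_of_lt_of_le hc (hIm t ht)
  · intro u hu t ht hut
    exact (CBesselAux.modOn_im hc ha0 hzc0.symm (hmodT t ht)).2 u ⟨hu, hut.le⟩ t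
      ⟨ht, le_refl t⟩ hut
  · intro H' hH' t ht
    have him' : ∀ u ∈ Set.Ici s, c ≤ (H' u).im :=
      CBesselAux.flow_im hc hzc0.symm ha0 hH'.1 hH'.2
    have hmod' : CBesselAux.ModOn a b s z c t H' := by
      refine ⟨hH'.1.mono Set.Icc_subset_Ici_self, ?_⟩
      intro u hu
      rw [hH'.2 u hu.1]
      have h4 : (∫ r in s..u, (H' r)⁻¹) = ∫ r in s..u, CBesselAux.gc c (H' r) := by
        apply intervalIntegral.integral_congr
        intro r hr
        rw [uIcc_of_le hu.1] at hr
        show (H' r)⁻¹ = CBesselAux.gc c (H' r)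
        exact (CBesselAux.gc_eq (him' r hr.1)).symm
      rw [h4]
      rfl
    exact CBesselAux.modOn_unique hc ha0.le hb hs ht hmod' (hmodT t ht)
      (Set.right_mem_Icc.2 ht)
end
end

section
/- Let δ < 0 and a := (1−δ)/2, let b : [0,∞) → ℝ be continuous, let s ≥ 0 and y > 0, and let H : [s,∞) → ℍ be the unique continuous solution of H_t = iy + (b_t − b_s) − a ∫_s^t (1/H_r) dr. Then for all t ≥ s: |Re H_t| ≤ 2 · sup_{r ∈ [s,t]} |b_r − b_s| and y ≤ Im H_t ≤ √(y² + 2a(t−s)). -/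
open MeasureTheory Set Filter Topology

noncomputable section

/-- Auxiliary real lemma for the bound on the real part. -/
lemma reAux {X B : ℝ → ℝ} {s u M : ℝ} (hsu : s ≤ u)
    (hX : ContinuousOn X (Icc s u)) (hXs : X s = 0)
    (hB : ∀ r ∈ Icc s u, |B r| ≤ M)
    (hkey : ∀ t1 ∈ Icc s u, X t1 = 0 → (∀ r ∈ Icc t1 u, 0 ≤ X r) → X u ≤ B u - B t1) :
    X u ≤ 2 * M := by
  by_contra hcon
  push_neg at hcon
  have hM0 : 0 ≤ M := le_trans (abs_nonneg _) (hB s ⟨le_rfl, hsu⟩)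
  have hXu : 0 < X u := by linarith
  set S : Set ℝ := Icc s u ∩ X ⁻¹' Iic 0 with hS
  have hSne : S.Nonempty := ⟨s, ⟨le_rfl, hsu⟩, by simp [hXs]⟩
  have hSbdd : BddAbove S := ⟨u, fun r hr => hr.1.2⟩
  have hScl : IsClosed S := hX.preimage_isClosed_of_isClosed isClosed_Icc isClosed_Iic
  set t1 := sSup S with ht1def
  have ht1S : t1 ∈ S := hScl.csSup_mem hSne hSbdd
  obtain ⟨⟨hst1, ht1u⟩, ht1X⟩ := ht1S
  have ht1X' : X t1 ≤ 0 := ht1X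
  have hpos : ∀ r, t1 < r → r ≤ u → 0 < X r := by
    intro r h1 h2
    by_contra hc
    push_neg at hc
    exact absurd (le_csSup hSbdd ⟨⟨hst1.trans h1.le, h2⟩, hc⟩) (not_le.2 h1)
  have ht1lt : t1 < u := by
    rcases lt_or_eq_of_le ht1u with h | h
    · exact h
    · exfalso; rw [h] at ht1X'; linarith
  have hXt1 : X t1 = 0 := by
    refine le_antisymm ht1X' ?_
    have hcw : Filter.Tendsto X (𝓝[Ioc t1 u] t1) (𝓝 (X t1)) :=
      (hX t1 ⟨hst1, ht1u⟩).mono (fun r hr => ⟨hst1.trans hr.1.le, hr.2⟩)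
    have hmem : t1 ∈ closure (Ioc t1 u) := by
      rw [closure_Ioc ht1lt.ne]; exact ⟨le_rfl, ht1u⟩
    have : (𝓝[Ioc t1 u] t1).NeBot := mem_closure_iff_nhdsWithin_neBot.1 hmem
    exact ge_of_tendsto hcw (Filter.eventually_of_mem self_mem_nhdsWithin
      (fun r hr => (hpos r hr.1 hr.2).le))
  have hnon : ∀ r ∈ Icc t1 u, 0 ≤ X r := by
    intro r hr
    rcases eq_or_lt_of_le hr.1 with h | h
    · rw [← h]; exact hXt1.ge
    · exact (hpos r h hr.2).le
  have h1 := hkey t1 ⟨hst1, ht1u⟩ hXt1 hnon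
  have h2 := abs_le.1 (hB u ⟨hsu, le_rfl⟩)
  have h3 := abs_le.1 (hB t1 ⟨hst1, ht1u⟩)
  linarith

/-- Estimates on the real and imaginary parts of the complex Bessel flow started at `iy`:
`|Re H_t| ≤ 2 sup_{r∈[s,t]} |b_r − b_s|` and `y ≤ Im H_t ≤ √(y² + 2a(t−s))`. -/
theorem complex_bessel_flow_re_im_bounds
    (δ : ℝ) (hδ : δ < 0) (a : ℝ) (ha : a = (1 - δ) / 2)
    (b : ℝ → ℝ) (hb : ContinuousOn b (Set.Ici (0 : ℝ)))
    (s : ℝ) (hs : 0 ≤ s) (y : ℝ) (hy : 0 < y)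
    (H : ℝ → ℂ) (hH : IsCBesselFlow a b s ((y : ℂ) * Complex.I) H)
    (hIm : ∀ t ∈ Set.Ici s, 0 < (H t).im) :
    ∀ t ∈ Set.Ici s,
      |(H t).re| ≤ 2 * sSup ((fun r => |b r - b s|) '' Set.Icc s t) ∧
      y ≤ (H t).im ∧ (H t).im ≤ Real.sqrt (y ^ 2 + 2 * a * (t - s)) := by
  obtain ⟨hHc, heq⟩ := hH
  have ha1 : (0:ℝ) < a := by rw [ha]; linarith
  have hne : ∀ r ∈ Ici s, H r ≠ 0 := by
    intro r hr h0
    have := hIm r hr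
    rw [h0] at this; simp at this
  have hnsq : ∀ r ∈ Ici s, 0 < Complex.normSq (H r) := fun r hr =>
    Complex.normSq_pos.2 (hne r hr)
  have hGc : ContinuousOn (fun r => (H r)⁻¹) (Ici s) := hHc.inv₀ hne
  have hint : ∀ t1 ∈ Ici s, ∀ t2 ∈ Ici s, t1 ≤ t2 →
      IntervalIntegrable (fun r => (H r)⁻¹) volume t1 t2 := by
    intro t1 ht1 t2 _ h12
    exact ((hGc.mono (fun r hr => le_trans ht1 hr.1)).intervalIntegrable_of_Icc h12)
  have hHs : H s = (y:ℂ) * Complex.I := by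
    have h0 := heq s self_mem_Ici
    simpa using h0
  -- integrand continuity
  have hcIm : ContinuousOn (fun r => (H r).im / Complex.normSq (H r)) (Ici s) :=
    (Complex.continuous_im.comp_continuousOn hHc).div
      (Complex.continuous_normSq.comp_continuousOn hHc) (fun r hr => (hnsq r hr).ne')
  have hcRe : ContinuousOn (fun r => (H r).re / Complex.normSq (H r)) (Ici s) :=
    (Complex.continuous_re.comp_continuousOn hHc).div
      (Complex.continuous_normSq.comp_continuousOn hHc) (fun r hr => (hnsq r hr).ne')
  -- imaginary part and real part of the integral
  have hImI : ∀ t ∈ Ici s, (∫ r in s..t, (H r)⁻¹).im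
      = - ∫ r in s..t, (H r).im / Complex.normSq (H r) := by
    intro t ht
    have h1 := (Complex.imCLM.intervalIntegral_comp_comm (hint s self_mem_Ici t ht ht)).symm
    simp only [Complex.imCLM_apply] at h1
    rw [h1, ← intervalIntegral.integral_neg]
    simp only [Complex.inv_im, neg_div]
  have hReI : ∀ t ∈ Ici s, (∫ r in s..t, (H r)⁻¹).re
      = ∫ r in s..t, (H r).re / Complex.normSq (H r) := by
    intro t ht
    have h1 := (Complex.reCLM.intervalIntegral_comp_comm (hint s self_mem_Ici t ht ht)).symm
    simp only [Complex.reCLM_apply] at h1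
    rw [h1]
    simp only [Complex.inv_re]
  have hImEq : ∀ t ∈ Ici s, (H t).im
      = y + a * ∫ r in s..t, (H r).im / Complex.normSq (H r) := by
    intro t ht
    have h1 := congrArg Complex.im (heq t ht)
    rw [Complex.sub_im, Complex.add_im, Complex.mul_im, Complex.mul_im] at h1
    simp only [Complex.ofReal_re, Complex.ofReal_im, Complex.I_re, Complex.I_im,
      Complex.sub_im] at h1
    rw [hImI t ht] at h1
    rw [h1]; ring
  have hReEq : ∀ t ∈ Ici s, (H t).re
      = (b t - b s) - a * ∫ r in s..t, (H r).re / Complex.normSq (H r) := by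
    intro t ht
    have h1 := congrArg Complex.re (heq t ht)
    rw [Complex.sub_re, Complex.add_re, Complex.mul_re, Complex.mul_re] at h1
    simp only [Complex.ofReal_re, Complex.ofReal_im, Complex.I_re, Complex.I_im,
      Complex.sub_re] at h1
    rw [hReI t ht] at h1
    rw [h1]; ring
  -- lower bound on imaginary part
  have hImLow : ∀ t ∈ Ici s, y ≤ (H t).im := by
    intro t ht
    have h0 : 0 ≤ ∫ r in s..t, (H r).im / Complex.normSq (H r) :=
      intervalIntegral.integral_nonneg ht
        (fun r hr => div_nonneg (hIm r hr.1).le (Complex.normSq_nonneg _))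
    have := hImEq t ht
    nlinarith
  -- upper bound on imaginary part via derivative comparison
  have hDeriv : ∀ x ∈ Ioi s, HasDerivAt (fun u => (H u).im)
      (a * ((H x).im / Complex.normSq (H x))) x := by
    intro x hx
    have hni : Ici s ∈ nhds x := Ici_mem_nhds hx
    have hgint : IntervalIntegrable (fun r => (H r).im / Complex.normSq (H r)) volume s x :=
      (hcIm.mono Icc_subset_Ici_self).intervalIntegrable_of_Icc (le_of_lt hx)
    have hmeas : StronglyMeasurableAtFilter (fun r => (H r).im / Complex.normSq (H r))
        (nhds x) volume :=
      ContinuousOn.stronglyMeasurableAtFilter isOpen_Ioi (hcIm.mono Ioi_subset_Ici_self) x hx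
    have hcx : ContinuousAt (fun r => (H r).im / Complex.normSq (H r)) x :=
      hcIm.continuousAt hni
    have h1 := intervalIntegral.integral_hasDerivAt_right hgint hmeas hcx
    have h2 : HasDerivAt (fun u => y + a * ∫ r in s..u, (H r).im / Complex.normSq (H r))
        (a * ((H x).im / Complex.normSq (H x))) x := by
      simpa using (h1.const_mul a).const_add y
    exact h2.congr_of_eventuallyEq (Filter.eventuallyEq_of_mem hni (fun u hu => hImEq u hu))
  have hFanti : AntitoneOn (fun u => (H u).im ^ 2 - 2 * a * (u - s)) (Ici s) := by
    have hcontF : ContinuousOn (fun u => (H u).im ^ 2 - 2 * a * (u - s)) (Ici s) :=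
      ((Complex.continuous_im.comp_continuousOn hHc).pow 2).sub
        ((continuous_const.mul (continuous_id.sub continuous_const)).continuousOn)
    have hFd : ∀ x ∈ Ioi s, HasDerivAt (fun u => (H u).im ^ 2 - 2 * a * (u - s))
        (2 * (H x).im * (a * ((H x).im / Complex.normSq (H x))) - 2 * a) x := by
      intro x hx
      have h1 := (hDeriv x hx).pow 2
      have h2 : HasDerivAt (fun u : ℝ => 2 * a * (u - s)) (2 * a) x := by
        simpa using (((hasDerivAt_id x).sub_const s).const_mul (2 * a))
      have h3 := h1.sub h2
      convert h3 using 1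
      · rfl
      · rfl
      · rfl
      · push_cast
        simp only [show (2:ℕ) - 1 = 1 from rfl, pow_one]
    apply antitoneOn_of_deriv_nonpos (convex_Ici s) hcontF
    · intro x hx
      rw [interior_Ici] at hx
      exact (hFd x hx).differentiableAt.differentiableWithinAt
    · intro x hx
      rw [interior_Ici] at hx
      rw [(hFd x hx).deriv]
      have hxIci : x ∈ Ici s := (le_of_lt hx : s ≤ x)
      have hsq : (H x).im ^ 2 ≤ Complex.normSq (H x) := by
        rw [Complex.normSq_apply]; nlinarith [sq_nonneg (H x).re]
      have hn := hnsq x hxIci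
      have key : (H x).im * ((H x).im / Complex.normSq (H x)) ≤ 1 := by
        rw [mul_div_assoc']
        apply div_le_one_of_le₀
        · nlinarith
        · exact hn.le
      nlinarith
  have hImUp : ∀ t ∈ Ici s, (H t).im ≤ Real.sqrt (y ^ 2 + 2 * a * (t - s)) := by
    intro t ht
    have h1 := hFanti (self_mem_Ici) ht ht
    have hIs : (H s).im = y := by rw [hHs]; simp
    simp only [hIs] at h1
    have h2 : (H t).im ^ 2 ≤ y ^ 2 + 2 * a * (t - s) := by nlinarith
    rw [Real.le_sqrt ((hIm t ht).le) (le_trans (sq_nonneg _) h2)]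
    exact h2
  -- the real part bound
  intro t ht
  refine ⟨?_, hImLow t ht, hImUp t ht⟩
  set M := sSup ((fun r => |b r - b s|) '' Icc s t) with hM
  have hbc : ContinuousOn (fun r => |b r - b s|) (Icc s t) :=
    ((hb.mono (fun r hr => hs.trans hr.1)).sub continuousOn_const).abs
  have hbdd : BddAbove ((fun r => |b r - b s|) '' Icc s t) :=
    (isCompact_Icc.image_of_continuousOn hbc).bddAbove
  have hBle : ∀ r ∈ Icc s t, |b r - b s| ≤ M := fun r hr => le_csSup hbdd ⟨r, hr, rfl⟩
  have hflow : ∀ t1 ∈ Icc s t, (H t).re - (H t1).re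
      = (b t - b t1) - a * ∫ r in t1..t, (H r).re / Complex.normSq (H r) := by
    intro t1 ht1
    have ht1' : t1 ∈ Ici s := ht1.1
    have e1 := hReEq t ht
    have e2 := hReEq t1 ht1'
    have hi1 : IntervalIntegrable (fun r => (H r).re / Complex.normSq (H r)) volume s t :=
      (hcRe.mono Icc_subset_Ici_self).intervalIntegrable_of_Icc ht
    have hi2 : IntervalIntegrable (fun r => (H r).re / Complex.normSq (H r)) volume s t1 :=
      (hcRe.mono Icc_subset_Ici_self).intervalIntegrable_of_Icc ht1.1
    have hsub := intervalIntegral.integral_interval_sub_left hi1 hi2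
    rw [e1, e2, ← hsub]
    ring
  have hXc : ContinuousOn (fun r => (H r).re) (Icc s t) :=
    (Complex.continuous_re.comp_continuousOn hHc).mono Icc_subset_Ici_self
  have hXs0 : (H s).re = 0 := by rw [hHs]; simp
  have hup : (H t).re ≤ 2 * M := by
    apply reAux (B := fun r => b r - b s) ht hXc hXs0 hBle
    intro t1 ht1 h0 hnn
    have hfl := hflow t1 ht1
    have hI : 0 ≤ ∫ r in t1..t, (H r).re / Complex.normSq (H r) :=
      intervalIntegral.integral_nonneg ht1.2
        (fun r hr => div_nonneg (hnn r hr) (Complex.normSq_nonneg _))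
    rw [h0] at hfl
    nlinarith
  have hdown : -(H t).re ≤ 2 * M := by
    apply reAux (X := fun r => -(H r).re) (B := fun r => -(b r - b s)) ht
      (hXc.neg) (by simp [hXs0])
      (fun r hr => by rw [abs_neg]; exact hBle r hr)
    intro t1 ht1 h0 hnn
    have hfl := hflow t1 ht1
    have hI : (∫ r in t1..t, (H r).re / Complex.normSq (H r)) ≤ 0 := by
      rw [← neg_nonneg, ← intervalIntegral.integral_neg]
      refine intervalIntegral.integral_nonneg ht1.2 (fun r hr => ?_)
      have h := div_nonneg (hnn r hr) (Complex.normSq_nonneg (H r))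
      rwa [neg_div] at h
    have h0' : (H t1).re = 0 := by simpa using h0
    rw [h0'] at hfl
    nlinarith
  rw [abs_le]
  exact ⟨by linarith, hup⟩
end
end

section
/- Let δ < 0 and a := (1−δ)/2, let b : [0,∞) → ℝ be continuous, and let H^b(s,t,z) denote the complex Bessel flow. Then for every 0 ≤ s ≤ t, the map z ↦ H^b(s,t,z) is injective on ℍ; that is, if z, w ∈ ℍ and z ≠ w, then H^b(s,t,z) ≠ H^b(s,t,w). -/
open MeasureTheory Set

noncomputable section

/-- Injectivity of the complex Bessel flow in the initial condition: if `z ≠ w` in the upper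
half-plane and `H₁`, `H₂` are the flows started at `z`, `w` respectively at time `s`, then
`H₁ t ≠ H₂ t` for every `t ≥ s`. -/
theorem complex_bessel_flow_injective
    (δ : ℝ) (hδ : δ < 0) (a : ℝ) (ha : a = (1 - δ) / 2)
    (b : ℝ → ℝ) (hb : ContinuousOn b (Set.Ici (0 : ℝ)))
    (s : ℝ) (hs : 0 ≤ s)
    (z w : ℂ) (hz : 0 < z.im) (hw : 0 < w.im) (hzw : z ≠ w)
    (H₁ : ℝ → ℂ) (hH₁ : IsCBesselFlow a b s z H₁)
    (hIm₁ : ∀ r ∈ Set.Ici s, 0 < (H₁ r).im)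
    (H₂ : ℝ → ℂ) (hH₂ : IsCBesselFlow a b s w H₂)
    (hIm₂ : ∀ r ∈ Set.Ici s, 0 < (H₂ r).im) :
    ∀ t ∈ Set.Ici s, H₁ t ≠ H₂ t := by
  intro t ht hcontra
  obtain ⟨hc₁, he₁⟩ := hH₁
  obtain ⟨hc₂, he₂⟩ := hH₂
  have hst : s ≤ t := ht
  -- continuous extensions of H₁, H₂ to all of ℝ
  set P : ℝ → ℂ := fun u => H₁ (max u s) with hP_def
  set Q : ℝ → ℂ := fun u => H₂ (max u s) with hQ_def
  have hmax : Continuous fun u : ℝ => max u s := continuous_id.max continuous_const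
  have hPc : Continuous P := hc₁.comp_continuous hmax fun x => Set.mem_Ici.mpr (le_max_right _ _)
  have hQc : Continuous Q := hc₂.comp_continuous hmax fun x => Set.mem_Ici.mpr (le_max_right _ _)
  have hPeq : ∀ u ∈ Set.Ici s, P u = H₁ u := fun u hu => by
    simp only [hP_def, max_eq_left (le_max_right u s)]
    rw [max_eq_left hu]
  have hQeq : ∀ u ∈ Set.Ici s, Q u = H₂ u := fun u hu => by
    simp only [hQ_def]
    rw [max_eq_left hu]
  have hPne : ∀ u, P u ≠ 0 := fun u h => by
    have := hIm₁ (max u s) (le_max_right u s)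
    rw [show H₁ (max u s) = P u from rfl, h] at this
    simp at this
  have hQne : ∀ u, Q u ≠ 0 := fun u h => by
    have := hIm₂ (max u s) (le_max_right u s)
    rw [show H₂ (max u s) = Q u from rfl, h] at this
    simp at this
  have hPQne : ∀ u, P u * Q u ≠ 0 := fun u => mul_ne_zero (hPne u) (hQne u)
  -- the "difference field"
  set g : ℝ → ℂ := fun u => (a : ℂ) * ((P u * Q u)⁻¹ * (P u - Q u)) with hg_def
  have hgc : Continuous g :=
    continuous_const.mul (((hPc.mul hQc).inv₀ hPQne).mul (hPc.sub hQc))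
  set D : ℝ → ℂ := fun u => (z - w) + ∫ r in s..u, g r with hD_def
  -- D agrees with H₁ - H₂ on [s, ∞)
  have hDeq : ∀ u ∈ Set.Ici s, D u = H₁ u - H₂ u := by
    intro u hu
    have hsu : s ≤ u := hu
    have hsub : Set.uIcc s u ⊆ Set.Ici s := by
      rw [Set.uIcc_of_le hsu]; exact fun r hr => hr.1
    have hint₁ : IntervalIntegrable (fun r => (H₁ r)⁻¹) volume s u :=
      (((hc₁.mono hsub).inv₀ fun r hr => fun h => by
        have := hIm₁ r (hsub hr); rw [h] at this; simp at this)).intervalIntegrable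
    have hint₂ : IntervalIntegrable (fun r => (H₂ r)⁻¹) volume s u :=
      (((hc₂.mono hsub).inv₀ fun r hr => fun h => by
        have := hIm₂ r (hsub hr); rw [h] at this; simp at this)).intervalIntegrable
    have hcongr : ∀ r ∈ Set.uIcc s u,
        g r = (a : ℂ) * ((H₂ r)⁻¹ - (H₁ r)⁻¹) := by
      intro r hr
      have hrs : r ∈ Set.Ici s := hsub hr
      have h1 : H₁ r ≠ 0 := fun h => by
        have := hIm₁ r hrs; rw [h] at this; simp at this
      have h2 : H₂ r ≠ 0 := fun h => by
        have := hIm₂ r hrs; rw [h] at this; simp at this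
      simp only [hg_def, hPeq r hrs, hQeq r hrs]
      rw [mul_inv, mul_sub, mul_comm (H₁ r)⁻¹ (H₂ r)⁻¹, mul_assoc, inv_mul_cancel₀ h1,
        mul_one, mul_comm (H₂ r)⁻¹ (H₁ r)⁻¹, mul_assoc, inv_mul_cancel₀ h2, mul_one]
    have : (∫ r in s..u, g r)
        = (a : ℂ) * ((∫ r in s..u, (H₂ r)⁻¹) - ∫ r in s..u, (H₁ r)⁻¹) := by
      rw [intervalIntegral.integral_congr hcongr,
        intervalIntegral.integral_const_mul, intervalIntegral.integral_sub hint₂ hint₁]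
    rw [hD_def]
    simp only [this, he₁ u hu, he₂ u hu]
    ring
  -- D is differentiable with derivative g
  have hDderiv : ∀ v : ℝ, HasDerivAt D (g v) v := by
    intro v
    have h1 : HasDerivAt (fun u => ∫ r in s..u, g r) (g v) v :=
      intervalIntegral.integral_hasDerivAt_right (hgc.intervalIntegrable s v)
        (hgc.stronglyMeasurableAtFilter volume _) hgc.continuousAt
    simpa [hD_def] using h1.const_add (z - w)
  -- bound on the coefficient on [s, t]
  obtain ⟨C, hC⟩ := (isCompact_Icc (a := s) (b := t)).exists_bound_of_continuousOn
    ((hPc.mul hQc).inv₀ hPQne).continuousOn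
  set K := |a| * C with hK_def
  -- reversed function
  set G : ℝ → ℂ := fun x => D (s + t - x) with hG_def
  have hGderiv : ∀ x : ℝ, HasDerivAt G (-g (s + t - x)) x := by
    intro x
    have h1 : HasDerivAt (fun x : ℝ => s + t - x) (-1) x := by
      simpa using (hasDerivAt_id x).const_sub (s + t)
    have h2 := HasDerivAt.scomp (x := x) (hDderiv (s + t - x)) h1
    have h3 : ((-1 : ℝ) • g (s + t - x)) = -g (s + t - x) := by
      simp
    rw [h3] at h2
    exact h2
  have hGdiff : Differentiable ℝ G := fun x => (hGderiv x).differentiableAt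
  have hGcont : Continuous G := hGdiff.continuous
  -- Grönwall
  have hgron : ∀ x ∈ Set.Icc s t, ‖G x‖ ≤ gronwallBound 0 K 0 (x - s) := by
    apply norm_le_gronwallBound_of_norm_deriv_right_le hGcont.continuousOn
      (fun x _ => (hGderiv x).hasDerivWithinAt)
    · have : G s = H₁ t - H₂ t := by
        rw [hG_def]; simp only [add_sub_cancel_left]; exact hDeq t ht
      rw [this, hcontra, sub_self, norm_zero]
    · intro x hx
      set v := s + t - x with hv_def
      have hv : v ∈ Set.Icc s t := by
        constructor
        · rw [hv_def]; linarith [hx.2]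
        · rw [hv_def]; linarith [hx.1]
      have hGx : G x = P v - Q v := by
        rw [hG_def]
        simp only []
        rw [hDeq v hv.1, hPeq v hv.1, hQeq v hv.1]
      have hCineq : ‖(P v * Q v)⁻¹‖ ≤ C := hC v hv
      calc ‖-g v‖ = ‖(a : ℂ)‖ * (‖(P v * Q v)⁻¹‖ * ‖P v - Q v‖) := by
            rw [norm_neg, hg_def]; simp [norm_mul]
        _ ≤ |a| * (C * ‖G x‖) := by
            rw [Complex.norm_real, Real.norm_eq_abs, hGx]
            exact mul_le_mul_of_nonneg_left
              (mul_le_mul_of_nonneg_right hCineq (norm_nonneg _)) (abs_nonneg a)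
        _ = K * ‖G x‖ + 0 := by rw [hK_def]; ring
  -- conclusion: D s = 0, but D s = z - w ≠ 0
  have hGt : ‖G t‖ ≤ 0 := by
    have := hgron t ⟨hst, le_refl t⟩
    rwa [gronwallBound_ε0_δ0] at this
  have hGt0 : G t = 0 := norm_le_zero_iff.mp hGt
  have hDs : D s = z - w := by
    rw [hD_def]; simp
  have : G t = z - w := by
    rw [hG_def]; simp only [add_sub_cancel_right]; exact hDs
  rw [hGt0] at this
  exact hzw (sub_eq_zero.mp this.symm)
end
end

section
/- Let δ < 0 and a := (1−δ)/2, let b : [0,∞) → ℝ be continuous, and let H^b(s,t,z) denote the complex Bessel flow. For z ∈ ℍ let K^b(s,·,z) : [s,∞) → ℂ be the unique continuous solution of the linearized equation K_t = 1 + a ∫_s^t K_r / (H^b(s,r,z))² dr. Then for every 0 ≤ s ≤ t, the map z ↦ H^b(s,t,z) is holomorphic on ℍ and its complex derivative at z equals K^b(s,t,z). -/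
open MeasureTheory Set

noncomputable section

/-- `K` is a continuous solution on `[s,∞)` of the linearized equation
`K_t = 1 + a ∫_s^t K_r / (H_r)² dr` along the flow `H`. -/
def IsLinearizedFlow (a : ℝ) (s : ℝ) (H K : ℝ → ℂ) : Prop :=
  ContinuousOn K (Set.Ici s) ∧
    ∀ t ∈ Set.Ici s, K t = 1 + (a : ℂ) * ∫ r in s..t, K r / (H r) ^ 2

lemma ftc_right' {F : ℝ → ℂ} {s t x : ℝ} (hF : ContinuousOn F (Icc s t))
    (hx : x ∈ Ico s t) :
    HasDerivWithinAt (fun u => ∫ r in s..u, F r) (F x) (Ici x) x := by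
  have hmem : Icc s t ∈ nhdsWithin x (Ici x) := Icc_mem_nhdsGE_of_mem hx
  have hmem' : Icc s t ∈ nhdsWithin x (Ioi x) :=
    nhdsWithin_mono x Ioi_subset_Ici_self hmem
  have hint : IntervalIntegrable F volume s x :=
    (hF.mono (Icc_subset_Icc le_rfl hx.2.le)).intervalIntegrable_of_Icc hx.1
  have hmeas : StronglyMeasurableAtFilter F (nhdsWithin x (Ioi x)) :=
    ⟨Icc s t, hmem', hF.aestronglyMeasurable measurableSet_Icc⟩
  have hcont : ContinuousWithinAt F (Ioi x) x :=
    (hF.continuousWithinAt ⟨hx.1, hx.2.le⟩).mono_of_mem_nhdsWithin hmem'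
  exact intervalIntegral.integral_hasDerivWithinAt_right hint hmeas hcont

lemma im_ge_of_flow {a : ℝ} (ha : 0 ≤ a) {b : ℝ → ℝ} {s : ℝ} {z : ℂ} {H : ℝ → ℂ}
    (hH : IsCBesselFlow a b s z H) (hpos : ∀ r ∈ Ici s, 0 < (H r).im) :
    ∀ r ∈ Ici s, z.im ≤ (H r).im := by
  intro r hr
  have hne : ∀ u ∈ Icc s r, H u ≠ 0 := fun u hu h0 => by
    simpa [h0] using hpos u hu.1
  have hcont : ContinuousOn (fun u => (H u)⁻¹) (Icc s r) :=
    ((hH.1.mono Icc_subset_Ici_self).inv₀ hne)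
  have hint : IntervalIntegrable (fun u => (H u)⁻¹) volume s r :=
    hcont.intervalIntegrable_of_Icc hr
  have him : (∫ u in s..r, (H u)⁻¹).im = ∫ u in s..r, ((H u)⁻¹).im := by
    simpa using (Complex.imCLM.intervalIntegral_comp_comm hint).symm
  have heq : (H r).im = z.im - a * (∫ u in s..r, (H u)⁻¹).im := by
    rw [hH.2 r hr]; simp
  have hle : (∫ u in s..r, ((H u)⁻¹).im) ≤ 0 := by
    have h1 : 0 ≤ ∫ u in s..r, -(((H u)⁻¹).im) := by
      refine intervalIntegral.integral_nonneg hr fun u hu => ?_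
      have h2 := hpos u hu.1
      rw [Complex.inv_im, neg_div, neg_neg]
      have h3 : 0 ≤ Complex.normSq (H u) := Complex.normSq_nonneg _
      positivity
    rw [intervalIntegral.integral_neg] at h1
    linarith
  rw [heq, him]
  nlinarith

set_option maxHeartbeats 1000000 in
/-- The map `z ↦ H(s,t,z)` is holomorphic on the upper half-plane, with complex derivative
given by the solution `K(s,t,z)` of the linearized equation. -/
theorem complex_bessel_flow_holomorphic
    (δ : ℝ) (hδ : δ < 0) (a : ℝ) (ha : a = (1 - δ) / 2)
    (b : ℝ → ℝ) (hb : ContinuousOn b (Set.Ici (0 : ℝ)))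
    (s : ℝ) (hs : 0 ≤ s)
    (H : ℂ → ℝ → ℂ)
    (hH : ∀ z : ℂ, 0 < z.im → IsCBesselFlow a b s z (H z) ∧ ∀ r ∈ Set.Ici s, 0 < (H z r).im)
    (K : ℂ → ℝ → ℂ)
    (hK : ∀ z : ℂ, 0 < z.im → IsLinearizedFlow a s (H z) (K z)) :
    ∀ t ∈ Set.Ici s,
      DifferentiableOn ℂ (fun w => H w t) {w : ℂ | 0 < w.im} ∧
      ∀ z : ℂ, 0 < z.im → HasDerivAt (fun w => H w t) (K z t) z := by
  have ha0 : 0 < a := by rw [ha]; linarith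
  have main : ∀ t ∈ Ici s, ∀ z : ℂ, 0 < z.im → HasDerivAt (fun w => H w t) (K z t) z := by
    intro t ht z hz
    set m := z.im with hm
    obtain ⟨hHzflow, hHzim⟩ := hH z hz
    obtain ⟨hHzc, hHze⟩ := hHzflow
    obtain ⟨hKzc, hKze⟩ := hK z hz
    have hzlb : ∀ r ∈ Ici s, m ≤ (H z r).im := im_ge_of_flow ha0.le ⟨hHzc, hHze⟩ hHzim
    have hHzne : ∀ r ∈ Ici s, H z r ≠ 0 := fun r hr h0 => by
      simpa [h0] using hHzim r hr
    have hnorm_ge_im : ∀ u : ℂ, u.im ≤ ‖u‖ := fun u =>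
      (le_abs_self _).trans (Complex.abs_im_le_norm u)
    have hHznorm : ∀ r ∈ Icc s t, m ≤ ‖H z r‖ := fun r hr =>
      (hzlb r hr.1).trans (hnorm_ge_im _)
    have hm0 : 0 < m := hz
    set K₁ : ℝ := 2 * a / m ^ 2 with hK₁
    have hK₁0 : 0 < K₁ := by positivity
    set M : ℝ := Real.exp (K₁ * (t - s)) with hM
    have hM1 : 1 ≤ M := Real.one_le_exp (by
      have : (0:ℝ) ≤ t - s := by simpa using sub_nonneg.2 (show s ≤ t from ht)
      positivity)
    have hM0 : 0 < M := lt_of_lt_of_le one_pos hM1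
    set K₂ : ℝ := a / m ^ 2 with hK₂
    have hK₂0 : 0 < K₂ := by positivity
    set ε₀ : ℝ := 2 * a * M ^ 2 / m ^ 3 with hε₀
    have hε₀0 : 0 < ε₀ := by positivity
    set C : ℝ := gronwallBound 0 K₂ ε₀ (t - s) with hC
    have hC0 : 0 ≤ C := by
      rw [hC, gronwallBound_of_K_ne_0 hK₂0.ne']
      have h1 : (0:ℝ) ≤ t - s := by simpa using sub_nonneg.2 (show s ≤ t from ht)
      have h2 : (1:ℝ) ≤ Real.exp (K₂ * (t - s)) := Real.one_le_exp (by positivity)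
      have : 0 ≤ ε₀ / K₂ := by positivity
      nlinarith
    have key : ∀ w : ℂ, ‖w - z‖ < m / 2 →
        ‖H w t - H z t - (w - z) * K z t‖ ≤ C * ‖w - z‖ ^ 2 := by
      intro w hw
      have hwim2 : m - ‖w - z‖ ≤ w.im := by
        have h1 : z.im - w.im ≤ |(z - w).im| := by
          rw [Complex.sub_im]; exact le_abs_self _
        have h2 : |(z - w).im| ≤ ‖z - w‖ := Complex.abs_im_le_norm _
        have h3 : ‖z - w‖ = ‖w - z‖ := norm_sub_rev _ _
        linarith [h1.trans h2]
      have hwim : m / 2 ≤ w.im := by linarith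
      have hwim0 : 0 < w.im := by linarith
      obtain ⟨hHwflow, hHwim⟩ := hH w hwim0
      obtain ⟨hHwc, hHwe⟩ := hHwflow
      have hwlb : ∀ r ∈ Ici s, w.im ≤ (H w r).im := im_ge_of_flow ha0.le ⟨hHwc, hHwe⟩ hHwim
      have hHwne : ∀ r ∈ Ici s, H w r ≠ 0 := fun r hr h0 => by
        simpa [h0] using hHwim r hr
      have hHwnorm : ∀ r ∈ Icc s t, m / 2 ≤ ‖H w r‖ := fun r hr =>
        (hwim.trans (hwlb r hr.1)).trans (hnorm_ge_im _)
      -- the difference D and its integral equation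
      set D : ℝ → ℂ := fun u => H w u - H z u with hD
      set gD : ℝ → ℂ := fun u => (a : ℂ) * D u / (H w u * H z u) with hgD
      have hDcont : ContinuousOn D (Ici s) := hHwc.sub hHzc
      have hgDcont : ContinuousOn gD (Icc s t) := by
        apply ContinuousOn.div
        · exact continuousOn_const.mul (hDcont.mono Icc_subset_Ici_self)
        · exact (hHwc.mono Icc_subset_Ici_self).mul (hHzc.mono Icc_subset_Ici_self)
        · exact fun u hu => mul_ne_zero (hHwne u hu.1) (hHzne u hu.1)
      have hintw : ∀ x ∈ Ici s, IntervalIntegrable (fun u => (H w u)⁻¹) volume s x := by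
        intro x hx
        exact (((hHwc.mono Icc_subset_Ici_self).inv₀
          (fun u hu => hHwne u hu.1))).intervalIntegrable_of_Icc hx
      have hintz : ∀ x ∈ Ici s, IntervalIntegrable (fun u => (H z u)⁻¹) volume s x := by
        intro x hx
        exact (((hHzc.mono Icc_subset_Ici_self).inv₀
          (fun u hu => hHzne u hu.1))).intervalIntegrable_of_Icc hx
      have hDeq : ∀ x ∈ Ici s, D x = (w - z) + ∫ u in s..x, gD u := by
        intro x hx
        have h1 := hHwe x hx
        have h2 := hHze x hx
        have h3 : D x = (w - z) - (a : ℂ) *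
            ∫ u in s..x, ((H w u)⁻¹ - (H z u)⁻¹) := by
          rw [hD]
          simp only
          rw [h1, h2, intervalIntegral.integral_sub (hintw x hx) (hintz x hx)]
          ring
        rw [h3]
        have h4 : ∫ u in s..x, gD u
            = ∫ u in s..x, (-(a:ℂ)) * ((H w u)⁻¹ - (H z u)⁻¹) := by
          apply intervalIntegral.integral_congr
          intro u hu
          have hu' : u ∈ Ici s := by
            rcases hu with ⟨h5, h6⟩
            rw [min_eq_left hx] at h5
            exact h5
          have hwne := hHwne u hu'
          have hzne := hHzne u hu'
          rw [hgD]
          simp only [hD]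
          field_simp
          ring
        rw [h4, intervalIntegral.integral_const_mul]
        ring
      have hD' : ∀ x ∈ Ico s t, HasDerivWithinAt D (gD x) (Ici x) x := by
        intro x hx
        have h1 := (ftc_right' hgDcont hx).const_add (w - z)
        exact h1.congr (fun y hy => hDeq y (le_trans hx.1 hy)) (hDeq x hx.1)
      have hDbound : ∀ x ∈ Ico s t, ‖gD x‖ ≤ K₁ * ‖D x‖ + 0 := by
        intro x hx
        have hx' : x ∈ Icc s t := ⟨hx.1, hx.2.le⟩
        have h1 : ‖gD x‖ = a * ‖D x‖ / (‖H w x‖ * ‖H z x‖) := by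
          rw [hgD]
          simp only [norm_div, norm_mul, Complex.norm_real, Real.norm_eq_abs,
            abs_of_pos ha0]
        rw [h1, add_zero]
        have hw1 := hHwnorm x hx'
        have hz1 := hHznorm x hx'
        have h2 : m / 2 * m ≤ ‖H w x‖ * ‖H z x‖ :=
          mul_le_mul hw1 hz1 hm0.le (by linarith)
        have h3 : a * ‖D x‖ / (‖H w x‖ * ‖H z x‖) ≤ a * ‖D x‖ / (m / 2 * m) := by
          apply div_le_div_of_nonneg_left _ (by positivity) h2
          positivity
        refine h3.trans (le_of_eq ?_)
        rw [hK₁]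
        field_simp
      have hDs : ‖D s‖ ≤ ‖w - z‖ := by
        have := hDeq s Set.self_mem_Ici
        simp only [intervalIntegral.integral_same, add_zero] at this
        rw [this]
      have hgro1 := norm_le_gronwallBound_of_norm_deriv_right_le
        (hDcont.mono Icc_subset_Ici_self) hD' hDs hDbound
      have hDle : ∀ x ∈ Icc s t, ‖D x‖ ≤ M * ‖w - z‖ := by
        intro x hx
        have h1 := hgro1 x hx
        rw [gronwallBound_ε0] at h1
        have h2 : Real.exp (K₁ * (x - s)) ≤ M := by
          rw [hM]
          apply Real.exp_le_exp.2
          have := hx.2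
          nlinarith [hK₁0.le]
        calc ‖D x‖ ≤ ‖w - z‖ * Real.exp (K₁ * (x - s)) := h1
          _ ≤ ‖w - z‖ * M := by
              apply mul_le_mul_of_nonneg_left h2 (norm_nonneg _)
          _ = M * ‖w - z‖ := mul_comm _ _
      -- the second-order difference E and its integral equation
      set E : ℝ → ℂ := fun u => D u - (w - z) * K z u with hE
      set gE : ℝ → ℂ := fun u => gD u - (a : ℂ) * (w - z) * (K z u / (H z u) ^ 2) with hgE
      have hEcont : ContinuousOn E (Ici s) := hDcont.sub (continuousOn_const.mul hKzc)
      have hgDcont' : ContinuousOn gD (Ici s) := by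
        apply ContinuousOn.div
        · exact continuousOn_const.mul hDcont
        · exact hHwc.mul hHzc
        · exact fun u hu => mul_ne_zero (hHwne u hu) (hHzne u hu)
      have hKHcont : ContinuousOn (fun u => K z u / (H z u) ^ 2) (Ici s) := by
        exact ContinuousOn.div hKzc (hHzc.pow 2)
          (fun u hu => pow_ne_zero 2 (hHzne u hu))
      have hgEcont : ContinuousOn gE (Ici s) :=
        hgDcont'.sub (continuousOn_const.mul hKHcont)
      have hEeq : ∀ x ∈ Ici s, E x = ∫ u in s..x, gE u := by
        intro x hx
        have h1 := hDeq x hx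
        have h2 := hKze x hx
        have hintgD : IntervalIntegrable gD volume s x :=
          (hgDcont'.mono Icc_subset_Ici_self).intervalIntegrable_of_Icc hx
        have hintKH : IntervalIntegrable (fun u => K z u / (H z u) ^ 2) volume s x :=
          (hKHcont.mono Icc_subset_Ici_self).intervalIntegrable_of_Icc hx
        have h3 : ∫ u in s..x, gE u = (∫ u in s..x, gD u)
            - (a : ℂ) * (w - z) * ∫ u in s..x, K z u / (H z u) ^ 2 := by
          rw [hgE]
          rw [intervalIntegral.integral_sub hintgD (hintKH.const_mul _)]
          rw [intervalIntegral.integral_const_mul]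
        rw [hE]
        simp only
        rw [h1, h2, h3]
        ring
      have hE' : ∀ x ∈ Ico s t, HasDerivWithinAt E (gE x) (Ici x) x := by
        intro x hx
        exact (ftc_right' (hgEcont.mono Icc_subset_Ici_self) hx).congr
          (fun y hy => hEeq y (le_trans hx.1 hy)) (hEeq x hx.1)
      have hEbound : ∀ x ∈ Ico s t, ‖gE x‖ ≤ K₂ * ‖E x‖ + ε₀ * ‖w - z‖ ^ 2 := by
        intro x hx
        have hx' : x ∈ Icc s t := ⟨hx.1, hx.2.le⟩
        have hwne := hHwne x hx.1
        have hzne := hHzne x hx.1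
        have hid : gE x = (a : ℂ) * E x / (H z x) ^ 2
            - (a : ℂ) * (D x) ^ 2 / (H w x * (H z x) ^ 2) := by
          simp only [hgE, hgD, hE, hD]
          field_simp
          ring
        rw [hid]
        have hw1 := hHwnorm x hx'
        have hz1 := hHznorm x hx'
        have hDx := hDle x hx'
        have h1 : ‖(a : ℂ) * E x / (H z x) ^ 2‖ ≤ K₂ * ‖E x‖ := by
          rw [norm_div, norm_mul, norm_pow, Complex.norm_real, Real.norm_eq_abs,
            abs_of_pos ha0]
          have h1a : a * ‖E x‖ / ‖H z x‖ ^ 2 ≤ a * ‖E x‖ / m ^ 2 := by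
            apply div_le_div_of_nonneg_left (by positivity) (by positivity)
            nlinarith
          refine h1a.trans (le_of_eq ?_)
          rw [hK₂]
          ring
        have h2 : ‖(a : ℂ) * (D x) ^ 2 / (H w x * (H z x) ^ 2)‖ ≤ ε₀ * ‖w - z‖ ^ 2 := by
          rw [norm_div, norm_mul, norm_mul, norm_pow, norm_pow, Complex.norm_real,
            Real.norm_eq_abs, abs_of_pos ha0]
          have h2a : a * ‖D x‖ ^ 2 / (‖H w x‖ * ‖H z x‖ ^ 2)
              ≤ a * (M * ‖w - z‖) ^ 2 / (m / 2 * m ^ 2) := by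
            have hnum : a * ‖D x‖ ^ 2 ≤ a * (M * ‖w - z‖) ^ 2 :=
              mul_le_mul_of_nonneg_left
                (pow_le_pow_left₀ (norm_nonneg _) hDx 2) ha0.le
            have hden : m / 2 * m ^ 2 ≤ ‖H w x‖ * ‖H z x‖ ^ 2 :=
              mul_le_mul hw1 (pow_le_pow_left₀ hm0.le hz1 2)
                (by positivity) (norm_nonneg _)
            exact div_le_div₀ (by positivity) hnum (by positivity) hden
          refine h2a.trans (le_of_eq ?_)
          rw [hε₀]
          field_simp
        calc ‖(a : ℂ) * E x / (H z x) ^ 2 - (a : ℂ) * (D x) ^ 2 / (H w x * (H z x) ^ 2)‖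
            ≤ ‖(a : ℂ) * E x / (H z x) ^ 2‖ + ‖(a : ℂ) * (D x) ^ 2 / (H w x * (H z x) ^ 2)‖ :=
              norm_sub_le _ _
          _ ≤ K₂ * ‖E x‖ + ε₀ * ‖w - z‖ ^ 2 := add_le_add h1 h2
      have hEs : ‖E s‖ ≤ 0 := by
        rw [hEeq s Set.self_mem_Ici]
        simp
      have hgro2 := norm_le_gronwallBound_of_norm_deriv_right_le
        (hEcont.mono Icc_subset_Ici_self) hE' hEs hEbound
      have h9 := hgro2 t ⟨ht, le_rfl⟩
      have h10 : gronwallBound 0 K₂ (ε₀ * ‖w - z‖ ^ 2) (t - s) = C * ‖w - z‖ ^ 2 := by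
        rw [hC, gronwallBound_of_K_ne_0 hK₂0.ne', gronwallBound_of_K_ne_0 hK₂0.ne']
        ring
      have h11 : E t = H w t - H z t - (w - z) * K z t := by
        simp only [hE, hD]
      rw [← h11]
      rw [h10] at h9
      exact h9
    rw [hasDerivAt_iff_isLittleO, Asymptotics.isLittleO_iff]
    intro c hc
    have hδpos : 0 < min (m / 2) (c / (C + 1)) := lt_min (by positivity) (by positivity)
    filter_upwards [Metric.ball_mem_nhds z hδpos] with w hwball
    rw [Metric.mem_ball, dist_eq_norm] at hwball
    have hw1 : ‖w - z‖ < m / 2 := lt_of_lt_of_le hwball (min_le_left _ _)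
    have hw2 : ‖w - z‖ < c / (C + 1) := lt_of_lt_of_le hwball (min_le_right _ _)
    have hk := key w hw1
    have hr : (C + 1) * (c / (C + 1)) = c := mul_div_cancel₀ c (by positivity)
    rw [smul_eq_mul]
    have hx0 : (0:ℝ) ≤ ‖w - z‖ := norm_nonneg _
    have hr0 : (0:ℝ) ≤ c / (C + 1) := by positivity
    calc ‖H w t - H z t - (w - z) * K z t‖ ≤ C * ‖w - z‖ ^ 2 := hk
      _ = C * ‖w - z‖ * ‖w - z‖ := by ring
      _ ≤ C * ‖w - z‖ * (c / (C + 1)) :=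
          mul_le_mul_of_nonneg_left hw2.le (mul_nonneg hC0 hx0)
      _ ≤ (C + 1) * ‖w - z‖ * (c / (C + 1)) := by
          have h12 : C * ‖w - z‖ ≤ (C + 1) * ‖w - z‖ := by nlinarith
          exact mul_le_mul_of_nonneg_right h12 hr0
      _ = ((C + 1) * (c / (C + 1))) * ‖w - z‖ := by ring
      _ = c * ‖w - z‖ := by rw [hr]

  intro t ht
  refine ⟨fun w hw => ((main t ht w hw).differentiableAt).differentiableWithinAt, main t ht⟩
end
end

section
/- Let δ < 0 and a := (1−δ)/2, let b : [0,∞) → ℝ be continuous, let s ≥ 0 and x > 0. Then there exist a unique T ∈ (s, ∞] and a unique continuous function X : [s, T) → (0,∞) such that X_t = x + (b_t − b_s) − a ∫_s^t (1/X_r) dr for all t ∈ [s,T), and [s,T) is the maximal interval on which a positive continuous solution exists; moreover, if T < ∞ then X_t → 0 as t ↑ T. -/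
open MeasureTheory Set Filter

noncomputable section

namespace RBaux

open intervalIntegral Metric

/-- A positive continuous solution on the closed interval `[s,u]`. -/
def Sol (a : ℝ) (b : ℝ → ℝ) (s x u : ℝ) (X : ℝ → ℝ) : Prop :=
  ContinuousOn X (Icc s u) ∧
    ∀ t ∈ Icc s u, 0 < X t ∧ X t = x + (b t - b s) - a * ∫ r in s..t, (X r)⁻¹

lemma Sol.mono {a : ℝ} {b : ℝ → ℝ} {s x u u' : ℝ} {X : ℝ → ℝ}
    (h : Sol a b s x u X) (h' : u' ≤ u) : Sol a b s x u' X :=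
  ⟨h.1.mono (Icc_subset_Icc_right h'), fun t ht => h.2 t ⟨ht.1, ht.2.trans h'⟩⟩

lemma lipsOn {a ε : ℝ} (ha : 0 ≤ a) (hε : 0 < ε) (c : ℝ) (K : NNReal) (hK : a / ε ^ 2 ≤ (K : ℝ)) :
    LipschitzOnWith K (fun y : ℝ => -(a * (y + c)⁻¹)) {y : ℝ | ε ≤ y + c} := by
  rw [lipschitzOnWith_iff_dist_le_mul]
  intro y hy z hz
  simp only [mem_setOf_eq] at hy hz
  have hy0 : 0 < y + c := hε.trans_le hy
  have hz0 : 0 < z + c := hε.trans_le hz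
  rw [Real.dist_eq, Real.dist_eq]
  have h1 : -(a * (y + c)⁻¹) - -(a * (z + c)⁻¹) = a * (y - z) / ((y + c) * (z + c)) := by
    field_simp
    ring
  rw [h1, abs_div, abs_mul, abs_of_nonneg ha, abs_of_pos (mul_pos hy0 hz0)]
  have h2 : ε ^ 2 ≤ (y + c) * (z + c) := by nlinarith
  calc a * |y - z| / ((y + c) * (z + c)) ≤ a * |y - z| / ε ^ 2 := by
        gcongr
      _ = a / ε ^ 2 * |y - z| := by ring
      _ ≤ (K : ℝ) * |y - z| := mul_le_mul_of_nonneg_right hK (abs_nonneg _)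

theorem exists_sol_mem {v : ℝ → ℝ → ℝ} {tMin tMax : ℝ} {t₀ : Icc tMin tMax} (x₀ : ℝ)
    {R C L : NNReal}
    (hpl : IsPicardLindelof v t₀ x₀ R 0 C L) :
    ∃ f : ℝ → ℝ, f t₀ = x₀ ∧ (∀ t, f t ∈ closedBall x₀ R) ∧
      ∀ t ∈ Icc tMin tMax, HasDerivWithinAt f (v t (f t)) (Icc tMin tMax) t := by
  obtain ⟨α, hα⟩ := ODE.FunSpace.exists_isFixedPt_next hpl (mem_closedBall_self le_rfl)
  refine ⟨α.compProj, by rw [ODE.FunSpace.compProj_val, ← hα, ODE.FunSpace.next_apply₀],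
    fun t => α.compProj_mem_closedBall hpl.mul_max_le, fun t ht => ?_⟩
  apply ODE.hasDerivWithinAt_picard_Icc t₀.2 hpl.continuousOn_uncurry
    α.continuous_compProj.continuousOn (fun _ ht' => α.compProj_mem_closedBall hpl.mul_max_le)
    x₀ ht |>.congr_of_mem _ ht
  intro t' ht'
  nth_rw 1 [← hα]
  rw [ODE.FunSpace.compProj_of_mem ht', ODE.FunSpace.next_apply]


lemma sol_local {a : ℝ} (ha : 0 < a) (b : ℝ → ℝ) (t0 y0 ρ : ℝ) (hy0 : 0 < y0) (hρ : 0 < ρ)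
    (hbρ : ∀ t ∈ Icc t0 (t0 + ρ), |b t - b t0| ≤ y0 / 4)
    (hbc : ContinuousOn b (Icc t0 (t0 + ρ))) :
    ∃ X : ℝ → ℝ, ContinuousOn X (Icc t0 (t0 + min ρ (y0 ^ 2 / (8 * a)))) ∧
      ∀ t ∈ Icc t0 (t0 + min ρ (y0 ^ 2 / (8 * a))),
        0 < X t ∧ X t = y0 + (b t - b t0) - a * ∫ r in t0..t, (X r)⁻¹ := by
  set ε := min ρ (y0 ^ 2 / (8 * a)) with hεdef
  have hεpos : 0 < ε := lt_min hρ (by positivity)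
  have hερ : ε ≤ ρ := min_le_left _ _
  have hεy : ε ≤ y0 ^ 2 / (8 * a) := min_le_right _ _
  have hsub : Icc t0 (t0 + ε) ⊆ Icc t0 (t0 + ρ) := Icc_subset_Icc le_rfl (by linarith)
  set v : ℝ → ℝ → ℝ := fun t y => -(a * (y + (b t - b t0))⁻¹) with hvdef
  have key : ∀ t ∈ Icc t0 (t0 + ε), ∀ y ∈ closedBall y0 (y0 / 4), y0 / 2 ≤ y + (b t - b t0) := by
    intro t ht y hy
    have h1 := hbρ t (hsub ht)
    rw [mem_closedBall, Real.dist_eq] at hy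
    have h2 := abs_le.1 h1
    have h3 := abs_le.1 hy
    linarith [h2.1, h2.2, h3.1, h3.2]
  have hpl : IsPicardLindelof (tmin := t0) (tmax := t0 + ε) v ⟨t0, le_rfl, by linarith⟩ y0
      ⟨y0 / 4, by positivity⟩ 0 ⟨2 * a / y0, by positivity⟩ ⟨4 * a / y0 ^ 2, by positivity⟩ := by
    constructor
    · intro t ht
      have := lipsOn ha.le (half_pos hy0) (b t - b t0) ⟨4 * a / y0 ^ 2, by positivity⟩
        (le_of_eq (by show a / (y0 / 2) ^ 2 = 4 * a / y0 ^ 2; ring))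
      exact this.mono (fun y hy => key t ht y hy)
    · intro y hy
      refine ((continuousOn_const.mul (ContinuousOn.inv₀
        (continuousOn_const.add ((hbc.mono hsub).sub continuousOn_const)) ?_)).neg)
      intro t ht
      exact ne_of_gt (lt_of_lt_of_le (half_pos hy0) (key t ht y hy))
    · intro t ht y hy
      have hp : y0 / 2 ≤ y + (b t - b t0) := key t ht y hy
      have hp0 : 0 < y + (b t - b t0) := lt_of_lt_of_le (half_pos hy0) hp
      have : ‖v t y‖ = a * (y + (b t - b t0))⁻¹ := by
        rw [hvdef]
        simp only [Real.norm_eq_abs, abs_neg, abs_mul, abs_of_pos ha, abs_of_pos (inv_pos.2 hp0)]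
      rw [this]
      calc a * (y + (b t - b t0))⁻¹ ≤ a * (y0 / 2)⁻¹ := by gcongr
        _ = 2 * a / y0 := by field_simp
    · rw [NNReal.coe_zero, sub_zero]
      show (2 * a / y0) * max ((t0 + ε) - t0) (t0 - t0) ≤ y0 / 4
      have hmax : max ((t0 + ε) - t0) (t0 - t0) = ε := by
        rw [max_eq_left (by linarith)]; ring
      rw [hmax]
      calc (2 * a / y0) * ε ≤ (2 * a / y0) * (y0 ^ 2 / (8 * a)) := by gcongr
        _ = y0 / 4 := by field_simp; ring
  obtain ⟨F, hF0, hFball, hFd⟩ := exists_sol_mem y0 hpl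
  change F t0 = y0 at hF0
  have hFcont : ContinuousOn F (Icc t0 (t0 + ε)) := fun t ht => (hFd t ht).continuousWithinAt
  refine ⟨fun t => F t + (b t - b t0), ?_, ?_⟩
  · exact hFcont.add ((hbc.mono hsub).sub continuousOn_const)
  · intro t ht
    have hXlow : ∀ r ∈ Icc t0 (t0 + ε), y0 / 2 ≤ F r + (b r - b t0) := fun r hr =>
      key r hr (F r) (hFball r)
    have hXpos : ∀ r ∈ Icc t0 (t0 + ε), 0 < F r + (b r - b t0) := fun r hr =>
      lt_of_lt_of_le (half_pos hy0) (hXlow r hr)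
    constructor
    · exact hXpos t ht
    have hvF : ContinuousOn (fun r => v r (F r)) (Icc t0 (t0 + ε)) := by
      refine (continuousOn_const.mul (ContinuousOn.inv₀
        (hFcont.add ((hbc.mono hsub).sub continuousOn_const)) ?_)).neg
      exact fun r hr => ne_of_gt (hXpos r hr)
    have hFt : ∫ r in t0..t, v r (F r) = F t - F t0 := by
      refine integral_eq_sub_of_hasDeriv_right_of_le ht.1
        (hFcont.mono (Icc_subset_Icc_right ht.2)) (fun r hr => ?_) ?_
      · exact ((hFd r ⟨hr.1.le, hr.2.le.trans ht.2⟩).hasDerivAt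
          (Icc_mem_nhds hr.1 (lt_of_lt_of_le hr.2 ht.2))).hasDerivWithinAt
      · exact (hvF.mono (by rw [uIcc_of_le ht.1]; exact Icc_subset_Icc_right ht.2)).intervalIntegrable
    have hneg : ∫ r in t0..t, v r (F r) = -(a * ∫ r in t0..t, (F r + (b r - b t0))⁻¹) := by
      rw [hvdef]
      rw [intervalIntegral.integral_neg, intervalIntegral.integral_const_mul]
    rw [hF0] at hFt
    have : F t = y0 - (a * ∫ r in t0..t, (F r + (b r - b t0))⁻¹) := by
      rw [hneg] at hFt; linarith
    show F t + (b t - b t0) = y0 + (b t - b t0) - a * ∫ r in t0..t, (F r + (b r - b t0))⁻¹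
    rw [this]; ring

lemma sol_glue {a : ℝ} {b : ℝ → ℝ} {s x u w : ℝ} {X₁ X₂ : ℝ → ℝ}
    (hsu : s ≤ u) (huw : u ≤ w) (h1 : Sol a b s x u X₁)
    (hc2 : ContinuousOn X₂ (Icc u w))
    (h2 : ∀ t ∈ Icc u w, 0 < X₂ t ∧ X₂ t = X₁ u + (b t - b u) - a * ∫ r in u..t, (X₂ r)⁻¹) :
    ∃ X, Sol a b s x w X := by
  have hX2u : X₂ u = X₁ u := by
    have := (h2 u ⟨le_rfl, huw⟩).2
    simpa using this
  refine ⟨fun t => X₁ (min t u) + (X₂ (max t u) - X₂ u), ?_, ?_⟩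
  · refine ContinuousOn.add ?_ (ContinuousOn.sub ?_ continuousOn_const)
    · exact h1.1.comp ((continuous_id.min continuous_const).continuousOn)
        (fun t ht => ⟨le_min ht.1 hsu, min_le_right _ _⟩)
    · exact hc2.comp ((continuous_id.max continuous_const).continuousOn)
        (fun t ht => ⟨le_max_right _ _, max_le ht.2 huw⟩)
  · have heq1 : ∀ t ∈ Icc s u, X₁ (min t u) + (X₂ (max t u) - X₂ u) = X₁ t := by
      intro t ht
      rw [min_eq_left ht.2, max_eq_right ht.2]
      ring
    have heq2 : ∀ t ∈ Icc u w, X₁ (min t u) + (X₂ (max t u) - X₂ u) = X₂ t := by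
      intro t ht
      rw [min_eq_right ht.1, max_eq_left ht.1, hX2u]
      ring
    have hpos : ∀ t ∈ Icc s w, 0 < X₁ (min t u) + (X₂ (max t u) - X₂ u) := by
      intro t ht
      rcases le_total t u with h | h
      · rw [heq1 t ⟨ht.1, h⟩]; exact (h1.2 t ⟨ht.1, h⟩).1
      · rw [heq2 t ⟨h, ht.2⟩]; exact (h2 t ⟨h, ht.2⟩).1
    intro t ht
    refine ⟨hpos t ht, ?_⟩
    show X₁ (min t u) + (X₂ (max t u) - X₂ u)
      = x + (b t - b s) - a * ∫ r in s..t, (X₁ (min r u) + (X₂ (max r u) - X₂ u))⁻¹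
    rcases le_total t u with h | h
    · have ht1 : t ∈ Icc s u := ⟨ht.1, h⟩
      rw [heq1 t ht1, (h1.2 t ht1).2]
      congr 2
      refine (intervalIntegral.integral_congr (fun r hr => ?_)).symm
      rw [uIcc_of_le ht.1] at hr
      rw [heq1 r ⟨hr.1, hr.2.trans h⟩]
    · have ht2 : t ∈ Icc u w := ⟨h, ht.2⟩
      have hI1 : IntervalIntegrable (fun r => (X₁ (min r u) + (X₂ (max r u) - X₂ u))⁻¹)
          volume s u := by
        apply ContinuousOn.intervalIntegrable
        rw [uIcc_of_le hsu]
        refine ContinuousOn.inv₀ ?_ (fun r hr => ne_of_gt (hpos r ⟨hr.1, hr.2.trans huw⟩))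
        refine ContinuousOn.add ?_ (ContinuousOn.sub ?_ continuousOn_const)
        · exact h1.1.comp ((continuous_id.min continuous_const).continuousOn)
            (fun r hr => ⟨le_min hr.1 hsu, min_le_right _ _⟩)
        · exact hc2.comp ((continuous_id.max continuous_const).continuousOn)
            (fun r hr => ⟨le_max_right _ _, max_le (hr.2.trans huw) huw⟩)
      have hI2 : IntervalIntegrable (fun r => (X₁ (min r u) + (X₂ (max r u) - X₂ u))⁻¹)
          volume u t := by
        apply ContinuousOn.intervalIntegrable
        rw [uIcc_of_le h]
        refine ContinuousOn.inv₀ ?_ (fun r hr => ne_of_gt (hpos r ⟨hsu.trans hr.1, hr.2.trans ht2.2⟩))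
        refine ContinuousOn.add ?_ (ContinuousOn.sub ?_ continuousOn_const)
        · exact h1.1.comp ((continuous_id.min continuous_const).continuousOn)
            (fun r hr => ⟨le_min (hsu.trans hr.1) hsu, min_le_right _ _⟩)
        · exact hc2.comp ((continuous_id.max continuous_const).continuousOn)
            (fun r hr => ⟨le_max_right _ _, max_le (hr.2.trans ht2.2) huw⟩)
      have hadd := intervalIntegral.integral_add_adjacent_intervals hI1 hI2
      have hc1 : (∫ r in s..u, (X₁ (min r u) + (X₂ (max r u) - X₂ u))⁻¹)
          = ∫ r in s..u, (X₁ r)⁻¹ := by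
        refine intervalIntegral.integral_congr (fun r hr => ?_)
        rw [uIcc_of_le hsu] at hr
        rw [heq1 r hr]
      have hc2' : (∫ r in u..t, (X₁ (min r u) + (X₂ (max r u) - X₂ u))⁻¹)
          = ∫ r in u..t, (X₂ r)⁻¹ := by
        refine intervalIntegral.integral_congr (fun r hr => ?_)
        rw [uIcc_of_le h] at hr
        rw [heq2 r ⟨hr.1, hr.2.trans ht2.2⟩]
      have e2 := (h2 t ht2).2
      have e1 := (h1.2 u ⟨hsu, le_rfl⟩).2
      rw [heq2 t ht2, e2, e1]
      rw [← hadd, hc1, hc2']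
      ring

lemma sol_uniq {a : ℝ} (ha : 0 < a) {b : ℝ → ℝ} {s x u : ℝ} {X₁ X₂ : ℝ → ℝ} (hsu : s ≤ u)
    (h1 : Sol a b s x u X₁) (h2 : Sol a b s x u X₂) : EqOn X₁ X₂ (Icc s u) := by
  -- positive lower bound
  obtain ⟨p1, hp1, hmin1⟩ := isCompact_Icc.exists_isMinOn (nonempty_Icc.2 hsu) h1.1
  obtain ⟨p2, hp2, hmin2⟩ := isCompact_Icc.exists_isMinOn (nonempty_Icc.2 hsu) h2.1
  set ε := min (X₁ p1) (X₂ p2) with hεdef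
  have hεpos : 0 < ε := lt_min (h1.2 p1 hp1).1 (h2.2 p2 hp2).1
  have hlow1 : ∀ t ∈ Icc s u, ε ≤ X₁ t := fun t ht => (min_le_left _ _).trans (hmin1 ht)
  have hlow2 : ∀ t ∈ Icc s u, ε ≤ X₂ t := fun t ht => (min_le_right _ _).trans (hmin2 ht)
  -- construct the C¹ reformulations
  have key : ∀ X : ℝ → ℝ, Sol a b s x u X → ∃ Z : ℝ → ℝ,
      (∀ t, HasDerivAt Z (-(a * (X (max s (min t u)))⁻¹)) t) ∧
      (∀ t ∈ Icc s u, Z t = X t - (b t - b s)) ∧ Z s = x := by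
    intro X hX
    have hclamp : Continuous fun r : ℝ => max s (min r u) :=
      continuous_const.max (continuous_id.min continuous_const)
    have hmaps : ∀ r : ℝ, max s (min r u) ∈ Icc s u :=
      fun r => ⟨le_max_left _ _, max_le hsu (min_le_right _ _)⟩
    have hXpos : ∀ t ∈ Icc s u, 0 < X t := fun t ht => (hX.2 t ht).1
    have hg : Continuous fun r => (X (max s (min r u)))⁻¹ := by
      refine Continuous.inv₀ (hX.1.comp_continuous hclamp hmaps) ?_
      exact fun r => ne_of_gt (hXpos _ (hmaps r))
    have hclampeq : ∀ r ∈ Icc s u, max s (min r u) = r := by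
      intro r hr
      rw [min_eq_left hr.2, max_eq_right hr.1]
    refine ⟨fun t => x - a * ∫ r in s..t, (X (max s (min r u)))⁻¹, fun t => ?_, ?_, ?_⟩
    · exact ((hg.integral_hasStrictDerivAt s t).hasDerivAt.const_mul a).const_sub x
    · intro t ht
      have hcong : (∫ r in s..t, (X (max s (min r u)))⁻¹) = ∫ r in s..t, (X r)⁻¹ := by
        refine intervalIntegral.integral_congr (fun r hr => ?_)
        rw [uIcc_of_le ht.1] at hr
        rw [hclampeq r ⟨hr.1, hr.2.trans ht.2⟩]
      have := (hX.2 t ht).2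
      simp only [hcong]
      rw [this]; ring
    · simp
  obtain ⟨Z₁, hZ₁d, hZ₁e, hZ₁s⟩ := key X₁ h1
  obtain ⟨Z₂, hZ₂d, hZ₂e, hZ₂s⟩ := key X₂ h2
  have hKpos : (0:ℝ) ≤ a / ε ^ 2 := by positivity
  have huniq : EqOn Z₁ Z₂ (Icc s u) := by
    refine ODE_solution_unique_of_mem_Icc_right
      (v := fun t y => -(a * (y + (b t - b s))⁻¹))
      (s := fun t => {y : ℝ | ε ≤ y + (b t - b s)})
      (K := ⟨a / ε ^ 2, hKpos⟩)
      (fun t _ => lipsOn ha.le hεpos (b t - b s) _ le_rfl)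
      (fun t ht => (hZ₁d t).continuousAt.continuousWithinAt)
      (fun t ht => ?_) (fun t ht => ?_)
      (fun t ht => (hZ₂d t).continuousAt.continuousWithinAt)
      (fun t ht => ?_) (fun t ht => ?_) (hZ₁s.trans hZ₂s.symm)
    · have ht' : t ∈ Icc s u := ⟨ht.1, ht.2.le⟩
      have hcl : max s (min t u) = t := by rw [min_eq_left ht.2.le, max_eq_right ht.1]
      have hval : (fun y : ℝ => -(a * (y + (b t - b s))⁻¹)) (Z₁ t)
          = -(a * (X₁ (max s (min t u)))⁻¹) := by
        simp only []
        rw [hZ₁e t ht', hcl]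
        have : X₁ t - (b t - b s) + (b t - b s) = X₁ t := by ring
        rw [this]
      convert (hZ₁d t).hasDerivWithinAt using 1
    · have ht' : t ∈ Icc s u := ⟨ht.1, ht.2.le⟩
      simp only [mem_setOf_eq, hZ₁e t ht']
      have := hlow1 t ht'
      linarith
    · have ht' : t ∈ Icc s u := ⟨ht.1, ht.2.le⟩
      have hcl : max s (min t u) = t := by rw [min_eq_left ht.2.le, max_eq_right ht.1]
      have hval : (fun y : ℝ => -(a * (y + (b t - b s))⁻¹)) (Z₂ t)
          = -(a * (X₂ (max s (min t u)))⁻¹) := by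
        simp only []
        rw [hZ₂e t ht', hcl]
        have : X₂ t - (b t - b s) + (b t - b s) = X₂ t := by ring
        rw [this]
      convert (hZ₂d t).hasDerivWithinAt using 1
    · have ht' : t ∈ Icc s u := ⟨ht.1, ht.2.le⟩
      simp only [mem_setOf_eq, hZ₂e t ht']
      have := hlow2 t ht'
      linarith
  intro t ht
  have := huniq ht
  have e1 := hZ₁e t ht
  have e2 := hZ₂e t ht
  linarith

lemma exists_rho {b : ℝ → ℝ} (hb : ContinuousOn b (Ici (0:ℝ))) {u y0 : ℝ} (hu : 0 ≤ u)
    (hy : 0 < y0) : ∃ ρ > 0, (∀ t ∈ Icc u (u + ρ), |b t - b u| ≤ y0 / 4) ∧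
      ContinuousOn b (Icc u (u + ρ)) := by
  have hcw : ContinuousWithinAt b (Ici (0:ℝ)) u := hb u hu
  obtain ⟨d, hd, hball⟩ := Metric.continuousWithinAt_iff.1 hcw (y0 / 4) (by positivity)
  refine ⟨d / 2, by positivity, fun t ht => ?_, hb.mono (fun t ht => hu.trans ht.1)⟩
  have h1 : t ∈ Ici (0:ℝ) := hu.trans ht.1
  have h2 : dist t u < d := by
    rw [Real.dist_eq, abs_of_nonneg (by linarith [ht.1] : (0:ℝ) ≤ t - u)]
    linarith [ht.2]
  have := hball h1 h2
  rw [Real.dist_eq] at this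
  exact this.le

/-- extension of a solution beyond its right endpoint -/
lemma sol_extend {a : ℝ} (ha : 0 < a) {b : ℝ → ℝ} (hb : ContinuousOn b (Ici (0:ℝ)))
    {s x u : ℝ} (hs : 0 ≤ s) {X₁ : ℝ → ℝ} (hsu : s ≤ u) (h1 : Sol a b s x u X₁) :
    ∃ w, u < w ∧ ∃ X, Sol a b s x w X := by
  have hy0 : 0 < X₁ u := (h1.2 u ⟨hsu, le_rfl⟩).1
  obtain ⟨ρ, hρ, hbρ, hbc⟩ := exists_rho hb (hs.trans hsu) hy0
  obtain ⟨X₂, hX₂c, hX₂⟩ := sol_local ha b u (X₁ u) ρ hy0 hρ hbρ hbc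
  have hepos : 0 < min ρ ((X₁ u) ^ 2 / (8 * a)) := lt_min hρ (by positivity)
  exact ⟨u + min ρ ((X₁ u) ^ 2 / (8 * a)), by linarith,
    sol_glue hsu (by linarith) h1 hX₂c hX₂⟩


end RBaux

/-- `X` is a continuous positive solution on `[s,T)` of the integrated real Bessel equation
`X_t = x + (b_t − b_s) − a ∫_s^t (1/X_r) dr`, where `T ∈ (s,∞]` is an extended real. -/
def IsRealBesselSol (a : ℝ) (b : ℝ → ℝ) (s x : ℝ) (T : EReal) (X : ℝ → ℝ) : Prop :=
  ContinuousOn X {t : ℝ | s ≤ t ∧ (t : EReal) < T} ∧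
    ∀ t : ℝ, s ≤ t → (t : EReal) < T →
      0 < X t ∧ X t = x + (b t - b s) - a * ∫ r in s..t, (X r)⁻¹

open RBaux in
/-- For `δ < 0`, `a = (1−δ)/2`, continuous `b`, `s ≥ 0` and `x > 0`, there is a unique
`T ∈ (s,∞]` and a unique continuous positive solution `X` on `[s,T)` of the real Bessel
equation, `[s,T)` being the maximal interval of existence; if `T < ∞` then `X_t → 0` as
`t ↑ T`. -/
theorem real_bessel_flow_exists_unique
    (δ : ℝ) (hδ : δ < 0) (a : ℝ) (ha : a = (1 - δ) / 2)
    (b : ℝ → ℝ) (hb : ContinuousOn b (Set.Ici (0 : ℝ)))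
    (s : ℝ) (hs : 0 ≤ s) (x : ℝ) (hx : 0 < x) :
    ∃ (T : EReal) (X : ℝ → ℝ),
      (s : EReal) < T ∧ IsRealBesselSol a b s x T X ∧
      (∀ (T' : EReal) (X' : ℝ → ℝ), (s : EReal) < T' → IsRealBesselSol a b s x T' X' →
        T' ≤ T ∧ ∀ t : ℝ, s ≤ t → (t : EReal) < T' → X' t = X t) ∧
      (∀ Treal : ℝ, T = (Treal : EReal) →
        Tendsto X (nhdsWithin Treal (Set.Iio Treal)) (nhds 0)) := by
  classical
  have ha' : 0 < a := by rw [ha]; linarith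
  set A : Set ℝ := {u | s ≤ u ∧ ∃ Z, Sol a b s x u Z} with hAdef
  -- initial solution
  obtain ⟨ρ₀, hρ₀, hbρ₀, hbc₀⟩ := exists_rho hb hs hx
  obtain ⟨X₀, hX₀c, hX₀⟩ := sol_local ha' b s x ρ₀ hx hρ₀ hbρ₀ hbc₀
  have he₀pos : 0 < min ρ₀ (x ^ 2 / (8 * a)) := lt_min hρ₀ (by positivity)
  set e₀ := min ρ₀ (x ^ 2 / (8 * a)) with he₀def
  have hsA : s + e₀ ∈ A := ⟨by linarith, X₀, hX₀c, hX₀⟩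
  have hAne : A.Nonempty := ⟨s + e₀, hsA⟩
  -- global solution via choice
  set X : ℝ → ℝ := fun t => if h : ∃ Z, Sol a b s x t Z then h.choose t else x with hXdef
  have hXagree : ∀ u Z, s ≤ u → Sol a b s x u Z → ∀ t ∈ Icc s u, X t = Z t := by
    intro u Z hsu hZ t ht
    have hZt : Sol a b s x t Z := hZ.mono ht.2
    have hex : ∃ W, Sol a b s x t W := ⟨Z, hZt⟩
    have h1 : X t = hex.choose t := by rw [hXdef]; simp only [dif_pos hex]
    rw [h1]
    exact sol_uniq ha' ht.1 hex.choose_spec hZt ⟨ht.1, le_rfl⟩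
  set T : EReal := if BddAbove A then ((sSup A : ℝ) : EReal) else ⊤ with hTdef
  have hwit : ∀ t : ℝ, (t : EReal) < T → ∃ w ∈ A, t < w := by
    intro t h
    by_cases hbdd : BddAbove A
    · rw [hTdef, if_pos hbdd] at h
      exact exists_lt_of_lt_csSup hAne (by exact_mod_cast h)
    · obtain ⟨w, hwA, hw⟩ := not_bddAbove_iff.1 hbdd t
      exact ⟨w, hwA, hw⟩
  have hmemT : ∀ u ∈ A, (u : EReal) ≤ T := by
    intro u hu
    by_cases hbdd : BddAbove A
    · rw [hTdef, if_pos hbdd]; exact_mod_cast le_csSup hbdd hu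
    · rw [hTdef, if_neg hbdd]; exact le_top
  have hsT : (s : EReal) < T := by
    refine lt_of_lt_of_le ?_ (hmemT _ hsA)
    exact_mod_cast (by linarith : s < s + e₀)
  have hsol : IsRealBesselSol a b s x T X := by
    constructor
    · intro t ht
      obtain ⟨w, hwA, htw⟩ := hwit t ht.2
      obtain ⟨hsw, Z, hZ⟩ := hwA
      have hXZ : ∀ r ∈ Icc s w, X r = Z r := hXagree w Z hsw hZ
      have h1 : ContinuousWithinAt Z ({r : ℝ | s ≤ r ∧ (r : EReal) < T} ∩ Iio w) t :=
        (hZ.1 t ⟨ht.1, htw.le⟩).mono (fun r hr => ⟨hr.1.1, hr.2.le⟩)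
      have h2 : ContinuousWithinAt X ({r : ℝ | s ≤ r ∧ (r : EReal) < T} ∩ Iio w) t :=
        h1.congr (fun r hr => hXZ r ⟨hr.1.1, hr.2.le⟩) (hXZ t ⟨ht.1, htw.le⟩)
      exact (continuousWithinAt_inter (Iio_mem_nhds htw)).1 h2
    · intro t hst htT
      obtain ⟨w, hwA, htw⟩ := hwit t htT
      obtain ⟨hsw, Z, hZ⟩ := hwA
      have hXZ : ∀ r ∈ Icc s w, X r = Z r := hXagree w Z hsw hZ
      have ht' : t ∈ Icc s w := ⟨hst, htw.le⟩
      obtain ⟨hpos, heq⟩ := hZ.2 t ht'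
      have hint : (∫ r in s..t, (X r)⁻¹) = ∫ r in s..t, (Z r)⁻¹ := by
        refine intervalIntegral.integral_congr (fun r hr => ?_)
        rw [uIcc_of_le hst] at hr
        rw [hXZ r ⟨hr.1, hr.2.trans htw.le⟩]
      rw [hXZ t ht', hint]
      exact ⟨hpos, heq⟩
  have hmax : ∀ (T' : EReal) (X' : ℝ → ℝ), (s : EReal) < T' → IsRealBesselSol a b s x T' X' →
      T' ≤ T ∧ ∀ t : ℝ, s ≤ t → (t : EReal) < T' → X' t = X t := by
    intro T' X' hsT' h'
    have hagree : ∀ t : ℝ, s ≤ t → (t : EReal) < T' → X' t = X t := by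
      intro t hst htT'
      have hsolt : Sol a b s x t X' := by
        refine ⟨h'.1.mono (fun r hr => ⟨hr.1, lt_of_le_of_lt ?_ htT'⟩), fun r hr =>
          h'.2 r hr.1 (lt_of_le_of_lt (by exact_mod_cast hr.2) htT')⟩
        exact_mod_cast hr.2
      exact (hXagree t X' hst hsolt t ⟨hst, le_rfl⟩).symm
    refine ⟨?_, hagree⟩
    by_contra hcon
    have hTT' : T < T' := not_le.1 hcon
    by_cases hbdd : BddAbove A
    · rw [hTdef, if_pos hbdd] at hTT'
      have hsτ : s ≤ sSup A := by
        have h1 := le_csSup hbdd hsA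
        linarith
      have hZ' : Sol a b s x (sSup A) X' := by
        refine ⟨h'.1.mono (fun r hr => ⟨hr.1, lt_of_le_of_lt ?_ hTT'⟩), fun r hr =>
          h'.2 r hr.1 (lt_of_le_of_lt (by exact_mod_cast hr.2) hTT')⟩
        exact_mod_cast hr.2
      obtain ⟨w, hw, X₃, hX₃⟩ := sol_extend ha' hb hs hsτ hZ'
      have hwle : w ≤ sSup A := le_csSup hbdd ⟨hsτ.trans hw.le, X₃, hX₃⟩
      linarith
    · rw [hTdef, if_neg hbdd] at hTT'
      exact absurd hTT' (not_top_lt)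
  refine ⟨T, X, hsT, hsol, hmax, ?_⟩
  intro Treal hTeq
  have hbdd : BddAbove A := by
    by_contra hbdd
    rw [hTdef, if_neg hbdd] at hTeq
    exact absurd hTeq (by simp)
  have hτeq : sSup A = Treal := by
    rw [hTdef, if_pos hbdd] at hTeq
    exact_mod_cast hTeq
  have hse : s + e₀ ≤ Treal := hτeq ▸ le_csSup hbdd hsA
  have hsτ : s < Treal := by linarith
  have hUC : UniformContinuousOn b (Icc 0 (Treal + 1)) :=
    isCompact_Icc.uniformContinuousOn_of_continuous (hb.mono (fun r hr => hr.1))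
  rw [Metric.tendsto_nhds]
  intro ε hε
  have hevmem : ∀ᶠ t in nhdsWithin Treal (Iio Treal), t ∈ Ioo s Treal :=
    Ioo_mem_nhdsLT_of_mem ⟨hsτ, le_rfl⟩
  have hXpos : ∀ᶠ t in nhdsWithin Treal (Iio Treal), 0 < X t := by
    filter_upwards [hevmem] with t ht
    refine (hsol.2 t ht.1.le ?_).1
    rw [hTeq]
    exact_mod_cast ht.2
  have hlt : ∀ᶠ t in nhdsWithin Treal (Iio Treal), X t < ε := by
    by_contra hcon
    have hfreq : ∃ᶠ t in nhdsWithin Treal (Iio Treal), ¬ X t < ε := Filter.not_eventually.1 hcon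
    obtain ⟨δ₁, hδ₁pos, hδ₁⟩ := Metric.uniformContinuousOn_iff.1 hUC (ε / 4) (by positivity)
    have hρpos : 0 < min δ₁ 1 / 2 := by
      have := lt_min hδ₁pos one_pos
      linarith
    set ρ := min δ₁ 1 / 2 with hρdef
    have hρδ : ρ < δ₁ := by
      have h1 : min δ₁ 1 ≤ δ₁ := min_le_left _ _
      rw [hρdef]; linarith
    have hρ1 : ρ ≤ 1 / 2 := by
      have h1 : min δ₁ 1 ≤ 1 := min_le_right _ _
      rw [hρdef]; linarith
    set d := min ρ (ε ^ 2 / (8 * a)) with hddef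
    have hdpos : 0 < d := lt_min hρpos (by positivity)
    have hmem : ∀ᶠ t in nhdsWithin Treal (Iio Treal), t ∈ Ioo (max (Treal - d) s) Treal :=
      Ioo_mem_nhdsLT_of_mem ⟨max_lt (by linarith) hsτ, le_rfl⟩
    obtain ⟨t0, hnot, ht0mem⟩ := (hfreq.and_eventually hmem).exists
    have hst0 : s < t0 := lt_of_le_of_lt (le_max_right _ _) ht0mem.1
    have ht0τ : t0 < Treal := ht0mem.2
    have ht0d : Treal - d < t0 := lt_of_le_of_lt (le_max_left _ _) ht0mem.1
    obtain ⟨w, hwA, ht0w⟩ := hwit t0 (by rw [hTeq]; exact_mod_cast ht0τ)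
    obtain ⟨hsw, Z, hZ⟩ := hwA
    have hZt0 : Sol a b s x t0 Z := hZ.mono ht0w.le
    have hXZ : X t0 = Z t0 := hXagree w Z hsw hZ t0 ⟨hst0.le, ht0w.le⟩
    have hy0pos : 0 < Z t0 := (hZ.2 t0 ⟨hst0.le, ht0w.le⟩).1
    have hy0ε : ε ≤ Z t0 := by rw [← hXZ]; exact not_lt.1 hnot
    have hbρ : ∀ t ∈ Icc t0 (t0 + ρ), |b t - b t0| ≤ Z t0 / 4 := by
      intro t ht
      have ht0mem' : t0 ∈ Icc (0:ℝ) (Treal + 1) := ⟨hs.trans hst0.le, by linarith⟩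
      have htmem : t ∈ Icc (0:ℝ) (Treal + 1) :=
        ⟨(hs.trans hst0.le).trans ht.1, by linarith [ht.2]⟩
      have hdist : dist t t0 < δ₁ := by
        rw [Real.dist_eq, abs_of_nonneg (by linarith [ht.1] : (0:ℝ) ≤ t - t0)]
        linarith [ht.2]
      have h2 := hδ₁ t htmem t0 ht0mem' hdist
      rw [Real.dist_eq] at h2
      calc |b t - b t0| ≤ ε / 4 := h2.le
        _ ≤ Z t0 / 4 := by linarith
    have hbc' : ContinuousOn b (Icc t0 (t0 + ρ)) :=
      hb.mono (fun r hr => (hs.trans hst0.le).trans hr.1)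
    obtain ⟨X₂, hX₂c, hX₂⟩ := sol_local ha' b t0 (Z t0) ρ hy0pos hρpos hbρ hbc'
    have hepos : 0 < min ρ ((Z t0) ^ 2 / (8 * a)) := lt_min hρpos (by positivity)
    obtain ⟨X₃, hX₃⟩ := sol_glue hst0.le (by linarith) hZt0 hX₂c hX₂
    have ht0eA : t0 + min ρ ((Z t0) ^ 2 / (8 * a)) ∈ A := ⟨by linarith, X₃, hX₃⟩
    have hle : t0 + min ρ ((Z t0) ^ 2 / (8 * a)) ≤ Treal := hτeq ▸ le_csSup hbdd ht0eA
    have hde : d ≤ min ρ ((Z t0) ^ 2 / (8 * a)) := by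
      refine min_le_min le_rfl ?_
      gcongr
    linarith
  filter_upwards [hXpos, hlt] with t h1 h2
  rw [Real.dist_eq, sub_zero, abs_lt]
  exact ⟨by linarith, h2⟩
end
end

section
/- Let δ < 0 and a := (1−δ)/2, let b : [0,∞) → ℝ be continuous, let s ≥ 0 and 0 < x < x̃. Let X and X̃ be the real Bessel flows started at x and x̃ at time s, with hitting times of zero T^{s,x} and T^{s,x̃} respectively. Then X_t < X̃_t for all t ∈ [s, min(T^{s,x}, T^{s,x̃})), and T^{s,x} ≤ T^{s,x̃} (as elements of (s,∞]). -/
open MeasureTheory Set Filter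

noncomputable section

open scoped Topology

/-- `X` is the maximal positive solution of the real Bessel equation started at `x` at time
`s`, with hitting time of zero `T`. -/
def IsMaxRealBesselSol (a : ℝ) (b : ℝ → ℝ) (s x : ℝ) (T : EReal) (X : ℝ → ℝ) : Prop :=
  (s : EReal) < T ∧ IsRealBesselSol a b s x T X ∧
    ∀ (T' : EReal) (X' : ℝ → ℝ), (s : EReal) < T' → IsRealBesselSol a b s x T' X' → T' ≤ T

lemma besselSol_icc_subset {s u : ℝ} {T : EReal} (hu : (u : EReal) < T) :
    Icc s u ⊆ {t : ℝ | s ≤ t ∧ (t : EReal) < T} := fun r hr =>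
  ⟨hr.1, lt_of_le_of_lt (EReal.coe_le_coe_iff.2 hr.2) hu⟩

lemma besselSol_apply_start {a : ℝ} {b : ℝ → ℝ} {s x : ℝ} {T : EReal} {X : ℝ → ℝ}
    (h : IsRealBesselSol a b s x T X) (hT : (s : EReal) < T) : X s = x := by
  have := (h.2 s le_rfl hT).2
  simpa using this

lemma besselSol_inv_contOn {a : ℝ} {b : ℝ → ℝ} {s x : ℝ} {T : EReal} {X : ℝ → ℝ}
    (h : IsRealBesselSol a b s x T X) {u : ℝ} (hu : (u : EReal) < T) :
    ContinuousOn (fun r => (X r)⁻¹) (Icc s u) :=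
  (h.1.mono (besselSol_icc_subset hu)).inv₀ fun r hr =>
    (h.2 r hr.1 (lt_of_le_of_lt (EReal.coe_le_coe_iff.2 hr.2) hu)).1.ne'

lemma bessel_comparison_lt {a : ℝ} (ha : 0 < a) {b : ℝ → ℝ} {s x xt : ℝ} (hxxt : x < xt)
    {T Tt : EReal} {X Xt : ℝ → ℝ}
    (hX : IsRealBesselSol a b s x T X) (hXt : IsRealBesselSol a b s xt Tt Xt) :
    ∀ t : ℝ, s ≤ t → (t : EReal) < T → (t : EReal) < Tt → X t < Xt t := by
  intro t hst htT htTt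
  by_contra hcon
  push_neg at hcon
  have hsT : (s : EReal) < T := lt_of_le_of_lt (EReal.coe_le_coe_iff.2 hst) htT
  have hsTt : (s : EReal) < Tt := lt_of_le_of_lt (EReal.coe_le_coe_iff.2 hst) htTt
  have hXs : X s = x := besselSol_apply_start hX hsT
  have hXts : Xt s = xt := besselSol_apply_start hXt hsTt
  set A := {u : ℝ | u ∈ Icc s t ∧ Xt u ≤ X u} with hAdef
  have hAne : A.Nonempty := ⟨t, ⟨hst, le_rfl⟩, hcon⟩
  have hAbdd : BddBelow A := ⟨s, fun u hu => hu.1.1⟩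
  have hXc : ContinuousOn X (Icc s t) := hX.1.mono (besselSol_icc_subset htT)
  have hXtc : ContinuousOn Xt (Icc s t) := hXt.1.mono (besselSol_icc_subset htTt)
  have hAclosed : IsClosed A := by
    have h1 := (hXc.sub hXtc).preimage_isClosed_of_isClosed isClosed_Icc
      (isClosed_Ici (a := (0:ℝ)))
    have : A = Icc s t ∩ (fun u => X u - Xt u) ⁻¹' Ici 0 := by
      ext u; simp [hAdef, sub_nonneg, and_comm]
    rw [this]; exact h1
  set t1 := sInf A with ht1def
  have ht1A : t1 ∈ A := hAclosed.csInf_mem hAne hAbdd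
  have hst1 : s ≤ t1 := ht1A.1.1
  have ht1t : t1 ≤ t := ht1A.1.2
  have ht1T : (t1 : EReal) < T := lt_of_le_of_lt (EReal.coe_le_coe_iff.2 ht1t) htT
  have ht1Tt : (t1 : EReal) < Tt := lt_of_le_of_lt (EReal.coe_le_coe_iff.2 ht1t) htTt
  have hslt1 : s < t1 := by
    rcases lt_or_eq_of_le hst1 with h | h
    · exact h
    · exfalso; have := ht1A.2; rw [← h, hXs, hXts] at this; linarith
  have hbefore : ∀ r, s ≤ r → r < t1 → X r < Xt r := by
    intro r h1 h2
    by_contra h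
    push_neg at h
    have hrA : r ∈ A := ⟨⟨h1, le_trans h2.le ht1t⟩, h⟩
    exact absurd (csInf_le hAbdd hrA) (not_le.2 h2)
  have hposX : ∀ r ∈ Icc s t1, 0 < X r := fun r hr =>
    (hX.2 r hr.1 (lt_of_le_of_lt (EReal.coe_le_coe_iff.2 hr.2) ht1T)).1
  have hposXt : ∀ r ∈ Icc s t1, 0 < Xt r := fun r hr =>
    (hXt.2 r hr.1 (lt_of_le_of_lt (EReal.coe_le_coe_iff.2 hr.2) ht1Tt)).1
  -- X t1 = Xt t1
  have heq : X t1 = Xt t1 := by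
    have hle : Xt t1 ≤ X t1 := ht1A.2
    have hc : ContinuousWithinAt (fun u => X u - Xt u) (Ico s t1) t1 := by
      have h2 := ((hX.1.mono (besselSol_icc_subset ht1T)).sub
        (hXt.1.mono (besselSol_icc_subset ht1Tt))) t1 (right_mem_Icc.2 hst1)
      exact h2.mono Ico_subset_Icc_self
    have hne : (𝓝[Ico s t1] t1).NeBot := by
      rw [nhdsWithin_Ico_eq_nhdsLT hslt1]
      infer_instance
    have hge : X t1 - Xt t1 ≤ 0 := by
      refine le_of_tendsto hc (eventually_nhdsWithin_of_forall fun u hu => ?_)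
      have := hbefore u hu.1 hu.2
      linarith
    linarith
  -- the integral equations at t1
  have eX := (hX.2 t1 hst1 ht1T).2
  have eXt := (hXt.2 t1 hst1 ht1Tt).2
  have hIX : IntervalIntegrable (fun r => (X r)⁻¹) volume s t1 :=
    (besselSol_inv_contOn hX ht1T).intervalIntegrable_of_Icc hst1
  have hIXt : IntervalIntegrable (fun r => (Xt r)⁻¹) volume s t1 :=
    (besselSol_inv_contOn hXt ht1Tt).intervalIntegrable_of_Icc hst1
  have hmono : (∫ r in s..t1, (Xt r)⁻¹) ≤ ∫ r in s..t1, (X r)⁻¹ := by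
    refine intervalIntegral.integral_mono_on hst1 hIXt hIX fun r hr => ?_
    rcases lt_or_eq_of_le hr.2 with h | h
    · have h1 := hbefore r hr.1 h
      have h2 := hposX r hr
      gcongr
    · rw [h, heq]
  have hmul : a * (∫ r in s..t1, (Xt r)⁻¹) ≤ a * ∫ r in s..t1, (X r)⁻¹ :=
    mul_le_mul_of_nonneg_left hmono ha.le
  rw [eX, eXt] at heq
  linarith

-- The local existence step: given c > 0 and t0 > 0, there is ε' > 0 and Z with
-- Z t0 = c, Z > c/2 on [t0, t0+ε'], and Z u = c + (b u - b t0) - a ∫_{t0}^u Z⁻¹.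
lemma bessel_local_exists {a : ℝ} (ha : 0 < a) {b : ℝ → ℝ}
    (hb : ContinuousOn b (Set.Ici (0 : ℝ))) {t0 c : ℝ} (ht0 : 0 < t0) (hc : 0 < c) :
    ∃ ε' > 0, ∃ Z : ℝ → ℝ, Z t0 = c ∧ ContinuousOn Z (Icc t0 (t0 + ε')) ∧
      (∀ u ∈ Icc t0 (t0 + ε'), c / 2 < Z u) ∧
      (∀ u ∈ Icc t0 (t0 + ε'),
        Z u = c + (b u - b t0) - a * ∫ r in t0..u, (Z r)⁻¹) := by
  -- continuity of b at t0
  have hbt0 : ContinuousAt b t0 := hb.continuousAt (Ici_mem_nhds ht0)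
  obtain ⟨δ, hδ, hδp⟩ := Metric.continuousAt_iff.mp hbt0 (c / 8) (by positivity)
  set ε0 : ℝ := δ / 2 with hε0def
  have hε0 : 0 < ε0 := by positivity
  have hbosc : ∀ t : ℝ, |t - t0| ≤ ε0 → |b t - b t0| ≤ c / 8 := by
    intro t ht
    have : dist t t0 < δ := by
      rw [Real.dist_eq]; calc |t - t0| ≤ ε0 := ht
        _ < δ := by rw [hε0def]; linarith
    exact (le_of_lt (by simpa [Real.dist_eq] using hδp this))
  set ε : ℝ := min ε0 (c ^ 2 / (8 * a)) with hεdef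
  have hε : 0 < ε := lt_min hε0 (by positivity)
  set t1 : ℝ := t0 + ε with ht1def
  set x₀ : ℝ := c - b t0 with hx₀def
  set v : ℝ → ℝ → ℝ := fun t w => -(a * (w + b t)⁻¹) with hvdef
  have hkey : ∀ t ∈ Icc t0 t1, ∀ w ∈ Metric.closedBall x₀ (c / 2), c / 4 ≤ w + b t := by
    intro t ht w hw
    have h1 : |w - x₀| ≤ c / 2 := by
      simpa [Real.dist_eq] using (Metric.mem_closedBall.1 hw)
    have h2 : |b t - b t0| ≤ c / 8 := by
      apply hbosc
      rw [abs_of_nonneg (by linarith [ht.1])]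
      have := ht.2
      have hεε0 : ε ≤ ε0 := min_le_left _ _
      rw [ht1def] at this
      linarith
    have e : w + b t = (w - x₀) + (b t - b t0) + c := by rw [hx₀def]; ring
    rw [e]
    have := abs_le.1 h1
    have := abs_le.1 h2
    linarith [this.1]
  have hbIcc : ContinuousOn b (Icc t0 t1) :=
    hb.mono fun r hr => le_trans ht0.le hr.1
  have hPL : IsPicardLindelof v (tmin := t0) (tmax := t1) ⟨t0, le_rfl, by linarith⟩ x₀
      (⟨c / 2, by positivity⟩ : NNReal) 0 (⟨4 * a / c, by positivity⟩ : NNReal)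
      (Real.toNNReal (16 * a / c ^ 2)) := by
    constructor
    · intro t ht
      apply LipschitzOnWith.of_dist_le_mul
      intro w hw w' hw'
      have p1 : c / 4 ≤ w + b t := hkey t ht w hw
      have p2 : c / 4 ≤ w' + b t := hkey t ht w' hw'
      have hp1 : (0:ℝ) < w + b t := by linarith
      have hp2 : (0:ℝ) < w' + b t := by linarith
      have e : v t w - v t w' = a * ((w - w') / ((w + b t) * (w' + b t))) := by
        rw [hvdef]
        field_simp
        ring
      rw [Real.dist_eq, Real.dist_eq, e]
      rw [abs_mul, abs_div, abs_mul, abs_of_nonneg ha.le, abs_of_pos hp1, abs_of_pos hp2]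
      rw [Real.coe_toNNReal _ (by positivity)]
      have hP : c ^ 2 / 16 ≤ (w + b t) * (w' + b t) := by nlinarith
      have key : a * |w - w'| ≤ 16 * a / c ^ 2 * |w - w'| * ((w + b t) * (w' + b t)) := by
        have h1 : 16 * a / c ^ 2 * |w - w'| * (c ^ 2 / 16) ≤
            16 * a / c ^ 2 * |w - w'| * ((w + b t) * (w' + b t)) :=
          mul_le_mul_of_nonneg_left hP (by positivity)
        have h2 : 16 * a / c ^ 2 * |w - w'| * (c ^ 2 / 16) = a * |w - w'| := by
          field_simp
        linarith
      rw [mul_div_assoc']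
      rw [div_le_iff₀ (mul_pos hp1 hp2)]
      linarith
    · intro w hw
      have : ContinuousOn (fun t => w + b t) (Icc t0 t1) := continuousOn_const.add hbIcc
      exact ((continuousOn_const.mul (this.inv₀ fun t ht =>
        ne_of_gt (lt_of_lt_of_le (by positivity) (hkey t ht w hw)))).neg)
    · intro t ht w hw
      have p1 : c / 4 ≤ w + b t := hkey t ht w hw
      have hp1 : (0:ℝ) < w + b t := by linarith
      rw [hvdef]
      simp only [norm_neg, Real.norm_eq_abs, abs_mul, abs_of_nonneg ha.le,
        abs_of_pos (inv_pos.2 hp1)]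
      have : (w + b t)⁻¹ ≤ (c / 4)⁻¹ := by
        apply inv_anti₀ (by positivity) p1
      calc a * (w + b t)⁻¹ ≤ a * (c / 4)⁻¹ := by
            exact mul_le_mul_of_nonneg_left this ha.le
        _ = 4 * a / c := by field_simp
    · show (4 * a / c) * max (t1 - t0) (t0 - t0) ≤ c / 2 - 0
      rw [sub_zero]
      have hmax : max (t1 - t0) (t0 - t0) = ε := by
        rw [ht1def]
        rw [max_eq_left (by linarith)]
        ring
      rw [hmax]
      have hεle : ε ≤ c ^ 2 / (8 * a) := min_le_right _ _
      have h1 : 4 * a / c * ε ≤ 4 * a / c * (c ^ 2 / (8 * a)) :=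
        mul_le_mul_of_nonneg_left hεle (by positivity)
      have h2 : 4 * a / c * (c ^ 2 / (8 * a)) = c / 2 := by field_simp; ring
      linarith
  obtain ⟨f, hf0', hfd⟩ := hPL.exists_eq_forall_mem_Icc_hasDerivWithinAt₀
  have hf0 : f t0 = x₀ := hf0'
  have hfc : ContinuousOn f (Icc t0 t1) := fun u hu => (hfd u hu).continuousWithinAt
  set Z : ℝ → ℝ := fun u => f u + b u with hZdef
  have hZcont : ContinuousOn Z (Icc t0 t1) := hfc.add hbIcc
  have hZt0 : Z t0 = c := by rw [hZdef]; simp only [hf0, hx₀def]; ring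
  -- choose ε'
  have hev : {u : ℝ | c / 2 < Z u} ∈ 𝓝[Icc t0 t1] t0 := by
    have h1 : ContinuousWithinAt Z (Icc t0 t1) t0 := hZcont t0 ⟨le_rfl, by linarith⟩
    exact h1.eventually (eventually_gt_nhds (by rw [hZt0]; linarith))
  obtain ⟨δ', hδ', hball⟩ := Metric.mem_nhdsWithin_iff.1 hev
  set ε' : ℝ := min (δ' / 2) ε with hε'def
  have hε'pos : 0 < ε' := lt_min (by positivity) hε
  have hε'ε : ε' ≤ ε := min_le_right _ _
  have hsub : Icc t0 (t0 + ε') ⊆ Icc t0 t1 := by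
    apply Icc_subset_Icc le_rfl
    rw [ht1def]; linarith
  have hZpos : ∀ u ∈ Icc t0 (t0 + ε'), c / 2 < Z u := by
    intro u hu
    apply hball
    constructor
    · rw [Metric.mem_ball, Real.dist_eq, abs_of_nonneg (by linarith [hu.1])]
      have := hu.2
      have : u - t0 ≤ ε' := by linarith
      have hd : ε' ≤ δ' / 2 := min_le_left _ _
      linarith
    · exact hsub hu
  refine ⟨ε', hε'pos, Z, hZt0, hZcont.mono hsub, hZpos, ?_⟩
  intro u hu
  have ht2t1 : t0 + ε' ≤ t1 := by rw [ht1def]; linarith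
  have hut1 : u ≤ t1 := le_trans hu.2 ht2t1
  have hcontZu : ContinuousOn Z (Icc t0 u) := hZcont.mono (Icc_subset_Icc le_rfl hut1)
  have hZposu : ∀ r ∈ Icc t0 u, 0 < Z r := fun r hr =>
    lt_of_le_of_lt (by positivity) (hZpos r ⟨hr.1, le_trans hr.2 hu.2⟩)
  set g' : ℝ → ℝ := fun r => -(a * (Z r)⁻¹) with hg'def
  have hint : IntervalIntegrable g' volume t0 u := by
    apply ContinuousOn.intervalIntegrable_of_Icc hu.1
    exact ((continuousOn_const.mul (hcontZu.inv₀ fun r hr =>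
      ne_of_gt (hZposu r hr))).neg)
  have hderiv : ∀ r ∈ Ioo t0 u, HasDerivWithinAt f (g' r) (Ioi r) r := by
    intro r hr
    have h := hfd r ⟨hr.1.le, le_trans hr.2.le hut1⟩
    have hrt1 : r < t1 := lt_of_lt_of_le hr.2 hut1
    have hmem : Icc t0 t1 ∈ 𝓝[>] r :=
      mem_of_superset (Ioc_mem_nhdsGT hrt1)
        (fun z hz => ⟨le_trans hr.1.le hz.1.le, hz.2⟩)
    have he : v r (f r) = g' r := rfl
    rw [he] at h
    exact h.mono_of_mem_nhdsWithin hmem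
  have hFTC := intervalIntegral.integral_eq_sub_of_hasDeriv_right_of_le hu.1
    (hfc.mono (Icc_subset_Icc le_rfl hut1)) hderiv hint
  have hre : (∫ r in t0..u, g' r) = -(a * ∫ r in t0..u, (Z r)⁻¹) := by
    rw [hg'def]
    rw [intervalIntegral.integral_neg, intervalIntegral.integral_const_mul]
  rw [hre, hf0] at hFTC
  have : Z u = f u + b u := rfl
  rw [this]
  rw [hx₀def] at hFTC
  linarith [hFTC]

lemma bessel_no_early_stop {a : ℝ} (ha : 0 < a) {b : ℝ → ℝ}
    (hb : ContinuousOn b (Set.Ici (0 : ℝ))) {s x xt : ℝ} (hs : 0 ≤ s)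
    (hxxt : x < xt) {T : EReal} {t0 : ℝ} {X Xt : ℝ → ℝ}
    (hX : IsRealBesselSol a b s x T X)
    (hXt : IsMaxRealBesselSol a b s xt ((t0 : ℝ) : EReal) Xt)
    (hst0 : s < t0) (ht0T : (t0 : EReal) < T) : False := by
  have ht0pos : 0 < t0 := lt_of_le_of_lt hs hst0
  -- comparison below t0
  have hcomp : ∀ r, s ≤ r → r < t0 → X r < Xt r := by
    intro r h1 h2
    exact bessel_comparison_lt ha hxxt hX hXt.2.1 r h1
      (lt_of_le_of_lt (EReal.coe_le_coe_iff.2 h2.le) ht0T) (EReal.coe_lt_coe_iff.2 h2)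
  -- minimum of X on [s, t0]
  have hXcont : ContinuousOn X (Icc s t0) := hX.1.mono (besselSol_icc_subset ht0T)
  obtain ⟨r0, hr0mem, hr0min⟩ :=
    isCompact_Icc.exists_isMinOn (nonempty_Icc.2 hst0.le) hXcont
  set m : ℝ := X r0 with hmdef
  have hm : 0 < m :=
    (hX.2 r0 hr0mem.1 (lt_of_le_of_lt (EReal.coe_le_coe_iff.2 hr0mem.2) ht0T)).1
  have hmle : ∀ r ∈ Icc s t0, m ≤ X r := fun r hr => hr0min hr
  -- lower bound for Xt on [s, t0)
  have hXtlb : ∀ r ∈ Ico s t0, m ≤ Xt r := fun r hr =>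
    le_trans (hmle r ⟨hr.1, hr.2.le⟩) (hcomp r hr.1 hr.2).le
  -- Xt is continuous on [s, t0)
  have hDXt : {t : ℝ | s ≤ t ∧ (t : EReal) < ((t0 : ℝ) : EReal)} = Ico s t0 := by
    ext u; simp [EReal.coe_lt_coe_iff, Ico]
  have hXtc : ContinuousOn Xt (Ico s t0) := by rw [← hDXt]; exact hXt.2.1.1
  set FXt : ℝ → ℝ := fun r => (Xt r)⁻¹ with hFXtdef
  have hFXtc : ContinuousOn FXt (Ico s t0) :=
    hXtc.inv₀ fun r hr => ne_of_gt (lt_of_lt_of_le hm (hXtlb r hr))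
  -- integrability of FXt on [s, t0]
  have hFXtInt : IntegrableOn FXt (Ioo s t0) := by
    have haesm : AEStronglyMeasurable FXt (volume.restrict (Ioo s t0)) :=
      ((hFXtc.aemeasurable measurableSet_Ico).mono_measure
        (Measure.restrict_mono Ioo_subset_Ico_self le_rfl)).aestronglyMeasurable
    refine ⟨haesm, ?_⟩
    apply HasFiniteIntegral.restrict_of_bounded (C := m⁻¹) measure_Ioo_lt_top
    refine (ae_restrict_mem measurableSet_Ioo).mono fun r hr => ?_
    have h1 : m ≤ Xt r := hXtlb r ⟨hr.1.le, hr.2⟩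
    have h2 : 0 < Xt r := lt_of_lt_of_le hm h1
    rw [Real.norm_eq_abs, abs_of_pos (inv_pos.2 h2)]
    exact inv_anti₀ hm h1
  have hFXtii : IntervalIntegrable FXt volume s t0 := by
    rw [intervalIntegrable_iff_integrableOn_Ioc_of_le hst0.le,
      integrableOn_Ioc_iff_integrableOn_Ioo]
    exact hFXtInt
  -- the continuous extension G of Xt to [s, t0]
  set G : ℝ → ℝ := fun u => xt + (b u - b s) - a * ∫ r in s..u, FXt r with hGdef
  have hbIcc : ContinuousOn b (Icc s t0) := hb.mono fun r hr => le_trans hs hr.1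
  have hGcont : ContinuousOn G (Icc s t0) := by
    have h1 : ContinuousOn (fun u => ∫ r in s..u, FXt r) (Icc s t0) := by
      have := intervalIntegral.continuousOn_primitive_interval'
        (μ := volume) (f := FXt) (b₁ := s) (b₂ := t0) (a := s) hFXtii
        (left_mem_uIcc)
      rwa [uIcc_of_le hst0.le] at this
    exact (continuousOn_const.add (hbIcc.sub continuousOn_const)).sub
      (continuousOn_const.mul h1)
  have hGXt : ∀ r ∈ Ico s t0, G r = Xt r := by
    intro r hr
    exact ((hXt.2.1.2 r hr.1 (EReal.coe_lt_coe_iff.2 hr.2)).2).symm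
  -- c := G t0, and X t0 ≤ c
  set c : ℝ := G t0 with hcdef
  have hXt0c : X t0 ≤ c := by
    have hgc : ContinuousWithinAt (fun u => G u - X u) (Ico s t0) t0 :=
      ((hGcont.sub hXcont) t0 (right_mem_Icc.2 hst0.le)).mono Ico_subset_Icc_self
    have hne : (𝓝[Ico s t0] t0).NeBot := by
      rw [nhdsWithin_Ico_eq_nhdsLT hst0]
      infer_instance
    have h0 : (0:ℝ) ≤ G t0 - X t0 := by
      refine ge_of_tendsto hgc (eventually_nhdsWithin_of_forall fun u hu => ?_)
      have h1 := hcomp u hu.1 hu.2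
      have h2 := hGXt u hu
      linarith
    linarith
  have hcpos : 0 < c := lt_of_lt_of_le (lt_of_lt_of_le hm (hmle t0 (right_mem_Icc.2 hst0.le))) hXt0c
  -- local solution Z beyond t0
  obtain ⟨ε', hε'pos, Z, hZt0, hZcont, hZpos, hZeq⟩ := bessel_local_exists ha hb ht0pos hcpos
  set t2 : ℝ := t0 + ε' with ht2def
  -- the glued function
  set XX : ℝ → ℝ := fun u => if u < t0 then Xt u else Z u with hXXdef
  have hXXIco : EqOn XX Xt (Ico s t0) := fun u hu => if_pos hu.2
  have hXXZ : EqOn XX Z (Icc t0 t2) := fun u hu => if_neg (not_lt.2 hu.1)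
  have hXXG : EqOn XX G (Icc s t0) := by
    intro u hu
    rcases lt_or_eq_of_le hu.2 with h | h
    · rw [hXXIco ⟨hu.1, h⟩, hGXt u ⟨hu.1, h⟩]
    · rw [h, hXXZ ⟨le_rfl, by linarith⟩, hZt0]
  have hXXcont : ContinuousOn XX (Icc s t0 ∪ Icc t0 t2) := by
    intro u hu
    have h1 : ContinuousWithinAt XX (Icc s t0) u := by
      by_cases h : u ∈ Icc s t0
      · exact ((hGcont u h).congr hXXG (hXXG h))
      · exact continuousWithinAt_of_notMem_closure (by rwa [isClosed_Icc.closure_eq])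
    have h2 : ContinuousWithinAt XX (Icc t0 t2) u := by
      by_cases h : u ∈ Icc t0 t2
      · exact ((hZcont u h).congr hXXZ (hXXZ h))
      · exact continuousWithinAt_of_notMem_closure (by rwa [isClosed_Icc.closure_eq])
    exact h1.union h2
  -- XX is a solution on [s, t2)
  have hsol : IsRealBesselSol a b s xt ((t2 : ℝ) : EReal) XX := by
    constructor
    · have hset : {t : ℝ | s ≤ t ∧ (t : EReal) < ((t2 : ℝ) : EReal)} = Ico s t2 := by
        ext u; simp [EReal.coe_lt_coe_iff, Ico]
      rw [hset]
      apply hXXcont.mono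
      intro u hu
      rcases lt_or_ge u t0 with h | h
      · exact Or.inl ⟨hu.1, h.le⟩
      · exact Or.inr ⟨h, hu.2.le⟩
    · intro u hsu hut2'
      have hut2 : u < t2 := EReal.coe_lt_coe_iff.1 hut2'
      by_cases hu0 : u < t0
      · have hpos := (hXt.2.1.2 u hsu (EReal.coe_lt_coe_iff.2 hu0)).1
        have heqn := (hXt.2.1.2 u hsu (EReal.coe_lt_coe_iff.2 hu0)).2
        have hXXu : XX u = Xt u := hXXIco ⟨hsu, hu0⟩
        constructor
        · rw [hXXu]; exact hpos
        · rw [hXXu, heqn]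
          congr 1
          congr 1
          apply intervalIntegral.integral_congr
          intro r hr
          rw [uIcc_of_le hsu] at hr
          exact (congrArg Inv.inv (hXXIco ⟨hr.1, lt_of_le_of_lt hr.2 hu0⟩)).symm
      · have ht0u : t0 ≤ u := not_lt.1 hu0
        have huIcc : u ∈ Icc t0 t2 := ⟨ht0u, hut2.le⟩
        have hXXu : XX u = Z u := hXXZ huIcc
        have hZu := hZeq u huIcc
        constructor
        · rw [hXXu]; exact lt_of_le_of_lt (by positivity) (hZpos u huIcc)
        · -- integrability of XX⁻¹ on [s, t0]
          have hae : (fun r => (XX r)⁻¹) =ᵐ[volume.restrict (Set.uIoc s t0)] FXt := by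
            have h1 : ∀ᵐ (r : ℝ) ∂volume, r ≠ t0 := by
              rw [ae_iff]
              have : {r : ℝ | ¬r ≠ t0} = {t0} := by ext r; simp
              rw [this]
              exact measure_singleton t0
            have h2 := ae_restrict_of_ae (μ := volume) (s := Set.uIoc s t0) h1
            filter_upwards [h2, ae_restrict_mem measurableSet_uIoc] with r hr hrmem
            rw [uIoc_of_le hst0.le] at hrmem
            have hrIco : r ∈ Ico s t0 := ⟨hrmem.1.le, lt_of_le_of_ne hrmem.2 hr⟩
            exact congrArg Inv.inv (hXXIco hrIco)
          have hI1 : IntervalIntegrable (fun r => (XX r)⁻¹) volume s t0 :=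
            hFXtii.congr_ae hae.symm
          -- integrability of XX⁻¹ on [t0, u]
          have hXXcontu : ContinuousOn XX (Icc t0 u) :=
            (hZcont.mono (Icc_subset_Icc le_rfl hut2.le)).congr
              fun r hr => hXXZ ⟨hr.1, le_trans hr.2 hut2.le⟩
          have hXXposu : ∀ r ∈ Icc t0 u, 0 < XX r := by
            intro r hr
            rw [hXXZ ⟨hr.1, le_trans hr.2 hut2.le⟩]
            exact lt_of_le_of_lt (by positivity) (hZpos r ⟨hr.1, le_trans hr.2 hut2.le⟩)
          have hI2 : IntervalIntegrable (fun r => (XX r)⁻¹) volume t0 u :=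
            (hXXcontu.inv₀ fun r hr => ne_of_gt (hXXposu r hr)).intervalIntegrable_of_Icc ht0u
          have hadd := intervalIntegral.integral_add_adjacent_intervals hI1 hI2
          have he1 : (∫ r in s..t0, (XX r)⁻¹) = ∫ r in s..t0, FXt r :=
            intervalIntegral.integral_congr_ae
              (by filter_upwards [ae_imp_of_ae_restrict hae] with r hr using hr)
          have he2 : (∫ r in t0..u, (XX r)⁻¹) = ∫ r in t0..u, (Z r)⁻¹ := by
            apply intervalIntegral.integral_congr
            intro r hr
            rw [uIcc_of_le ht0u] at hr
            exact congrArg Inv.inv (hXXZ ⟨hr.1, le_trans hr.2 hut2.le⟩)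
          have hcval : c = xt + (b t0 - b s) - a * ∫ r in s..t0, FXt r := rfl
          rw [hXXu, hZu]
          rw [← hadd, he1, he2, hcval]
          ring
  -- maximality of Tt gives a contradiction
  have hst2 : (s : EReal) < ((t2 : ℝ) : EReal) := EReal.coe_lt_coe_iff.2 (by linarith)
  have hfin := hXt.2.2 ((t2 : ℝ) : EReal) XX hst2 hsol
  have : t2 ≤ t0 := EReal.coe_le_coe_iff.1 hfin
  linarith


/-- Comparison for real Bessel flows: if `0 < x < x̃` then `X_t < X̃_t` on
`[s, min(T^{s,x}, T^{s,x̃}))` and `T^{s,x} ≤ T^{s,x̃}`. -/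
theorem real_bessel_flow_comparison
    (δ : ℝ) (hδ : δ < 0) (a : ℝ) (ha : a = (1 - δ) / 2)
    (b : ℝ → ℝ) (hb : ContinuousOn b (Set.Ici (0 : ℝ)))
    (s : ℝ) (hs : 0 ≤ s) (x xt : ℝ) (hx : 0 < x) (hxxt : x < xt)
    (T Tt : EReal) (X Xt : ℝ → ℝ)
    (hX : IsMaxRealBesselSol a b s x T X)
    (hXt : IsMaxRealBesselSol a b s xt Tt Xt) :
    (∀ t : ℝ, s ≤ t → (t : EReal) < min T Tt → X t < Xt t) ∧ T ≤ Tt := by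
  have ha' : 0 < a := by rw [ha]; linarith
  constructor
  · intro t hst ht
    exact bessel_comparison_lt ha' hxxt hX.2.1 hXt.2.1 t hst
      (lt_min_iff.1 ht).1 (lt_min_iff.1 ht).2
  · by_contra hcon
    push_neg at hcon
    have hTtne_top : Tt ≠ ⊤ := by
      intro h
      rw [h] at hcon
      exact not_top_lt hcon
    have hTtne_bot : Tt ≠ ⊥ := ne_bot_of_gt hXt.1
    set t0 : ℝ := Tt.toReal with ht0def
    have hTt : ((t0 : ℝ) : EReal) = Tt := EReal.coe_toReal hTtne_top hTtne_bot
    have hst0 : s < t0 := by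
      rw [← EReal.coe_lt_coe_iff (x := s) (y := t0), hTt]
      exact hXt.1
    have ht0T : ((t0 : ℝ) : EReal) < T := by rw [hTt]; exact hcon
    have hXt' : IsMaxRealBesselSol a b s xt ((t0 : ℝ) : EReal) Xt := by
      rw [hTt]; exact hXt
    exact bessel_no_early_stop ha' hb hs hxxt hX.2.1 hXt' hst0 ht0T
end
end

section
/- Let δ < 0 and a := (1−δ)/2, let b : [0,∞) → ℝ be continuous, let s ≥ 0, and for x > 0 let T^{s,x} ∈ (s,∞] denote the hitting time of 0 of the real Bessel flow started at x at time s. Then for every x > 0, the map y ↦ T^{s,y} is left-continuous at x; that is, lim_{y ↑ x} T^{s,y} = T^{s,x} (the limit exists by monotonicity, and the identity holds in the extended reals (s,∞]). -/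
open MeasureTheory Set Filter Topology

noncomputable section

namespace BesselAux

def trunc (c u : ℝ) : ℝ := (max u c)⁻¹

lemma trunc_pos {c : ℝ} (hc : 0 < c) (u : ℝ) : 0 < trunc c u :=
  inv_pos.2 (lt_of_lt_of_le hc (le_max_right _ _))

lemma trunc_le {c : ℝ} (hc : 0 < c) (u : ℝ) : trunc c u ≤ c⁻¹ :=
  inv_anti₀ hc (le_max_right _ _)

lemma trunc_eq {c u : ℝ} (hu : c ≤ u) : trunc c u = u⁻¹ := by
  rw [trunc, max_eq_left hu]

lemma trunc_continuous {c : ℝ} (hc : 0 < c) : Continuous (trunc c) := by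
  apply Continuous.inv₀ (continuous_id.max continuous_const)
  intro u
  exact ne_of_gt (lt_of_lt_of_le hc (le_max_right _ _))

lemma trunc_lip {c : ℝ} (hc : 0 < c) (u v : ℝ) :
    |trunc c u - trunc c v| ≤ (c ^ 2)⁻¹ * |u - v| := by
  have hu : 0 < max u c := lt_of_lt_of_le hc (le_max_right _ _)
  have hv : 0 < max v c := lt_of_lt_of_le hc (le_max_right _ _)
  have h1 : trunc c u - trunc c v = (max v c - max u c) / (max u c * max v c) := by
    rw [trunc, trunc]
    field_simp
  rw [h1, abs_div, abs_of_pos (mul_pos hu hv)]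
  have h2 : |max v c - max u c| ≤ |v - u| := abs_max_sub_max_le_abs _ _ _
  have h3 : c ^ 2 ≤ max u c * max v c := by
    have := mul_le_mul (le_max_right u c) (le_max_right v c) hc.le hu.le
    nlinarith
  have h4 : |v - u| = |u - v| := abs_sub_comm _ _
  rw [div_le_iff₀ (mul_pos hu hv)]
  calc |max v c - max u c| ≤ |u - v| := by rw [← h4]; exact h2
    _ = (c^2)⁻¹ * |u - v| * c^2 := by field_simp [ne_of_gt (pow_pos hc 2)]
    _ ≤ (c^2)⁻¹ * |u - v| * (max u c * max v c) := by
        apply mul_le_mul_of_nonneg_left h3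
        positivity


lemma exists_sol {a c : ℝ} (ha : 0 ≤ a) (hc : 0 < c) {g : ℝ → ℝ} (hg : Continuous g)
    (s t₁ y : ℝ) (hst : s ≤ t₁) :
    ∃ W : ℝ → ℝ, ContinuousOn W (Icc s t₁) ∧
      ∀ t ∈ Icc s t₁, W t = y + (g t - g s) - a * ∫ r in s..t, trunc c (W r) := by
  set v : ℝ → ℝ → ℝ := fun t z => -(a * trunc c (z + g t)) with hv
  have hL : (0:ℝ) ≤ a * (c^2)⁻¹ := by positivity
  set L : NNReal := ⟨a * (c^2)⁻¹, hL⟩ with hLdef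
  set C : ℝ := a * c⁻¹ with hC
  have hC0 : 0 ≤ C := by positivity
  set R : ℝ := C * (t₁ - s) + 1 with hR
  have hR0 : 0 ≤ R := by
    have : 0 ≤ C * (t₁ - s) := mul_nonneg hC0 (by linarith)
    linarith
  have hlip : ∀ t z z', |v t z - v t z'| ≤ (L : ℝ) * |z - z'| := by
    intro t z z'
    have : v t z - v t z' = -(a * (trunc c (z + g t) - trunc c (z' + g t))) := by
      simp [hv]; ring
    rw [this, abs_neg, abs_mul, abs_of_nonneg ha]
    calc a * |trunc c (z + g t) - trunc c (z' + g t)|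
        ≤ a * ((c^2)⁻¹ * |(z + g t) - (z' + g t)|) := by
          apply mul_le_mul_of_nonneg_left _ ha
          exact trunc_lip hc _ _
      _ = (L:ℝ) * |z - z'| := by
          show _ = a * (c^2)⁻¹ * |z - z'|
          rw [add_sub_add_right_eq_sub]; ring
  have hpl : IsPicardLindelof v (⟨s, le_refl s, hst⟩ : Icc s t₁) (y - g s)
      ⟨R, hR0⟩ 0 ⟨C, hC0⟩ L := by
    refine ⟨?_, ?_, ?_, ?_⟩
    · intro t _
      apply LipschitzWith.lipschitzOnWith
      apply LipschitzWith.of_dist_le_mul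
      intro z z'
      simpa [Real.dist_eq] using hlip t z z'
    · intro z _
      apply Continuous.continuousOn
      exact (continuous_const.mul ((trunc_continuous hc).comp (continuous_const.add hg))).neg
    · intro t _ z _
      have h1 : |v t z| = a * trunc c (z + g t) := by
        rw [hv]; simp [abs_mul, abs_of_nonneg ha,
          abs_of_nonneg (trunc_pos hc (z + g t)).le]
      show ‖v t z‖ ≤ C
      rw [Real.norm_eq_abs, h1]
      exact mul_le_mul_of_nonneg_left (trunc_le hc _) ha
    · show C * max (t₁ - s) (s - s) ≤ R - ((0:NNReal):ℝ)
      rw [NNReal.coe_zero, sub_zero]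
      have : max (t₁ - s) (s - s) = t₁ - s := by
        rw [max_eq_left]; linarith
      rw [this]
      linarith
  obtain ⟨Z, hZ0', hZd⟩ := hpl.exists_eq_forall_mem_Icc_hasDerivWithinAt₀
  have hZ0 : Z s = y - g s := hZ0'
  have hZc : ContinuousOn Z (Icc s t₁) := fun t ht => (hZd t ht).continuousWithinAt
  refine ⟨fun t => Z t + g t, hZc.add hg.continuousOn, ?_⟩
  intro t ht
  have hint : ∫ r in s..t, v r (Z r) = Z t - Z s := by
    apply intervalIntegral.integral_eq_sub_of_hasDeriv_right_of_le ht.1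
    · exact hZc.mono (Icc_subset_Icc le_rfl ht.2)
    · intro r hr
      have hmem : Icc s t₁ ∈ 𝓝 r := Icc_mem_nhds hr.1 (lt_of_lt_of_le hr.2 ht.2)
      exact ((hZd r ⟨hr.1.le, hr.2.le.trans ht.2⟩).hasDerivAt hmem).hasDerivWithinAt
    · apply ContinuousOn.intervalIntegrable
      rw [uIcc_of_le ht.1]
      have : ContinuousOn (fun r => Z r + g r) (Icc s t) :=
        (hZc.mono (Icc_subset_Icc le_rfl ht.2)).add hg.continuousOn
      show ContinuousOn (fun r => -(a * trunc c (Z r + g r))) (Icc s t)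
      exact (continuousOn_const.mul ((trunc_continuous hc).comp_continuousOn this)).neg
  have hint2 : ∫ r in s..t, v r (Z r) = -(a * ∫ r in s..t, trunc c (Z r + g r)) := by
    rw [← intervalIntegral.integral_const_mul, ← intervalIntegral.integral_neg]
  rw [hZ0] at hint
  have := hint2.symm.trans hint
  -- -(a * ∫) = Z t - (y - g s)
  have hZt : Z t = (y - g s) - a * ∫ r in s..t, trunc c (Z r + g r) := by linarith
  simp only []
  rw [hZt]; ring

lemma gronwall_int {a K : ℝ} (ha : 0 ≤ a) (hK : 0 ≤ K) {F : ℝ → ℝ}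
    (hFc : Continuous F) (hF : ∀ u v, |F u - F v| ≤ K * |u - v|)
    {s t₁ y₁ y₂ : ℝ} {G W₁ W₂ : ℝ → ℝ}
    (hW₁ : ContinuousOn W₁ (Icc s t₁)) (hW₂ : ContinuousOn W₂ (Icc s t₁))
    (h₁ : ∀ t ∈ Icc s t₁, W₁ t = y₁ + G t - a * ∫ r in s..t, F (W₁ r))
    (h₂ : ∀ t ∈ Icc s t₁, W₂ t = y₂ + G t - a * ∫ r in s..t, F (W₂ r)) :
    ∀ t ∈ Icc s t₁, |W₁ t - W₂ t| ≤ |y₁ - y₂| * Real.exp (a * K * (t - s)) := by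
  rcases le_or_gt s t₁ with hst | hst
  swap
  · intro t ht; exact absurd (ht.1.trans ht.2) (not_le.2 hst)
  set p : ℝ → ℝ := fun t => max s (min t t₁) with hp
  have hpc : Continuous p := continuous_const.max (continuous_id.min continuous_const)
  have hpm : ∀ t, p t ∈ Icc s t₁ := fun t =>
    ⟨le_max_left _ _, max_le hst (min_le_right _ _)⟩
  have hpe : ∀ t ∈ Icc s t₁, p t = t := fun t ht => by
    rw [hp]; simp only [min_eq_left ht.2, max_eq_right ht.1]
  set V₁ : ℝ → ℝ := fun t => W₁ (p t) with hV₁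
  set V₂ : ℝ → ℝ := fun t => W₂ (p t) with hV₂
  have hV₁c : Continuous V₁ := hW₁.comp_continuous hpc hpm
  have hV₂c : Continuous V₂ := hW₂.comp_continuous hpc hpm
  set φ : ℝ → ℝ := fun r => F (V₁ r) - F (V₂ r) with hφ
  have hφc : Continuous φ := (hFc.comp hV₁c).sub (hFc.comp hV₂c)
  set D : ℝ → ℝ := fun t => (y₁ - y₂) - a * ∫ r in s..t, φ r with hD
  have hDd : ∀ t, HasDerivAt D (-(a * φ t)) t := by
    intro t
    have h1 : HasDerivAt (fun u => ∫ r in s..u, φ r) (φ t) t :=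
      intervalIntegral.integral_hasDerivAt_right (hφc.intervalIntegrable _ _)
        (hφc.stronglyMeasurableAtFilter _ _) hφc.continuousAt
    simpa using (h1.const_mul a).const_sub (y₁ - y₂)
  have hDeq : ∀ t ∈ Icc s t₁, D t = W₁ t - W₂ t := by
    intro t ht
    have hsub : Icc s t ⊆ Icc s t₁ := Icc_subset_Icc le_rfl ht.2
    have hi₁ : IntervalIntegrable (fun r => F (W₁ r)) volume s t := by
      apply ContinuousOn.intervalIntegrable
      rw [uIcc_of_le ht.1]
      exact hFc.comp_continuousOn (hW₁.mono hsub)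
    have hi₂ : IntervalIntegrable (fun r => F (W₂ r)) volume s t := by
      apply ContinuousOn.intervalIntegrable
      rw [uIcc_of_le ht.1]
      exact hFc.comp_continuousOn (hW₂.mono hsub)
    have hcongr : ∫ r in s..t, φ r
        = (∫ r in s..t, F (W₁ r)) - ∫ r in s..t, F (W₂ r) := by
      rw [← intervalIntegral.integral_sub hi₁ hi₂]
      apply intervalIntegral.integral_congr
      intro r hr
      rw [uIcc_of_le ht.1] at hr
      simp only [hφ, hV₁, hV₂, hpe r (hsub hr)]
    rw [hD]
    simp only [hcongr]
    rw [h₁ t ht, h₂ t ht]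
    ring
  have key := norm_le_gronwallBound_of_norm_deriv_right_le
    (f := D) (f' := fun t => -(a * φ t)) (δ := |y₁ - y₂|) (K := a * K) (ε := 0)
    (a := s) (b := t₁)
    (fun t _ => (hDd t).continuousAt.continuousWithinAt)
    (fun t _ => (hDd t).hasDerivWithinAt)
    (by simp [hD, Real.norm_eq_abs])
    ?_
  · intro t ht
    have := key t ht
    rw [Real.norm_eq_abs, hDeq t ht, gronwallBound_ε0] at this
    exact this
  · intro t ht
    have ht' : t ∈ Icc s t₁ := ⟨ht.1, ht.2.le⟩
    rw [Real.norm_eq_abs, Real.norm_eq_abs, hDeq t ht', abs_neg, abs_mul,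
      abs_of_nonneg ha, add_zero]
    have h1 : |φ t| ≤ K * |W₁ t - W₂ t| := by
      have := hF (V₁ t) (V₂ t)
      simpa only [hφ, hV₁, hV₂, hpe t ht'] using this
    calc a * |φ t| ≤ a * (K * |W₁ t - W₂ t|) := mul_le_mul_of_nonneg_left h1 ha
      _ = a * K * |W₁ t - W₂ t| := by ring


lemma comparison {a : ℝ} (ha : 0 < a) {s u : ℝ} (hsu : s ≤ u) {y₁ y₂ : ℝ} (hy : y₁ < y₂)
    {G W₁ W₂ : ℝ → ℝ}
    (hc₁ : ContinuousOn W₁ (Icc s u)) (hc₂ : ContinuousOn W₂ (Icc s u))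
    (hp₁ : ∀ t ∈ Icc s u, 0 < W₁ t) (hp₂ : ∀ t ∈ Icc s u, 0 < W₂ t)
    (h₁ : ∀ t ∈ Icc s u, W₁ t = y₁ + G t - a * ∫ r in s..t, (W₁ r)⁻¹)
    (h₂ : ∀ t ∈ Icc s u, W₂ t = y₂ + G t - a * ∫ r in s..t, (W₂ r)⁻¹) :
    ∀ t ∈ Icc s u, W₁ t < W₂ t := by
  by_contra hcon
  push_neg at hcon
  obtain ⟨t₂, ht₂, ht₂le⟩ := hcon
  set S : Set ℝ := {t ∈ Icc s u | W₂ t - W₁ t ≤ 0} with hS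
  have hSne : S.Nonempty := ⟨t₂, ht₂, by linarith⟩
  have hSclosed : IsClosed S := by
    have h := (hc₂.sub hc₁).preimage_isClosed_of_isClosed isClosed_Icc
      (isClosed_Iic (a := (0:ℝ)))
    have : S = Icc s u ∩ (fun t => W₂ t - W₁ t) ⁻¹' Iic 0 := by
      ext t; simp [hS, Set.mem_sep_iff, and_comm]
    rwa [this]
  have hSbdd : BddBelow S := ⟨s, fun t ht => ht.1.1⟩
  set τ := sInf S with hτ
  have hτS : τ ∈ S := hSclosed.csInf_mem hSne hSbdd
  have hτIcc : τ ∈ Icc s u := hτS.1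
  have hDs : W₂ s - W₁ s = y₂ - y₁ := by
    have e₁ := h₁ s (left_mem_Icc.2 hsu)
    have e₂ := h₂ s (left_mem_Icc.2 hsu)
    rw [e₁, e₂]
    simp
  have hsτ : s < τ := by
    rcases lt_or_eq_of_le hτIcc.1 with h | h
    · exact h
    · exfalso
      have := hτS.2
      rw [← h] at this
      rw [hDs] at this
      linarith
  have hIco : ∀ t ∈ Ico s τ, 0 < W₂ t - W₁ t := by
    intro t ht
    by_contra hneg
    push_neg at hneg
    have htS : t ∈ S := ⟨⟨ht.1, ht.2.le.trans hτIcc.2⟩, hneg⟩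
    exact absurd (csInf_le hSbdd htS) (not_le.2 ht.2)
  -- integral positivity
  have hsubτ : Icc s τ ⊆ Icc s u := Icc_subset_Icc le_rfl hτIcc.2
  have hcont_int : ContinuousOn (fun r => (W₁ r)⁻¹ - (W₂ r)⁻¹) (Icc s τ) := by
    apply ContinuousOn.sub
    · exact ((hc₁.mono hsubτ).inv₀ (fun r hr => (hp₁ r (hsubτ hr)).ne'))
    · exact ((hc₂.mono hsubτ).inv₀ (fun r hr => (hp₂ r (hsubτ hr)).ne'))
  have hii : IntervalIntegrable (fun r => (W₁ r)⁻¹ - (W₂ r)⁻¹) volume s τ := by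
    apply ContinuousOn.intervalIntegrable
    rwa [uIcc_of_le hsτ.le]
  have hpos : 0 < ∫ r in s..τ, ((W₁ r)⁻¹ - (W₂ r)⁻¹) := by
    apply intervalIntegral.intervalIntegral_pos_of_pos_on hii _ hsτ
    intro r hr
    have hrIcc : r ∈ Icc s u := hsubτ ⟨hr.1.le, hr.2.le⟩
    have h12 : W₁ r < W₂ r := by
      have := hIco r ⟨hr.1.le, hr.2⟩
      linarith
    have := inv_strictAnti₀ (hp₁ r hrIcc) h12
    linarith
  have hii₁ : IntervalIntegrable (fun r => (W₁ r)⁻¹) volume s τ := by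
    apply ContinuousOn.intervalIntegrable
    rw [uIcc_of_le hsτ.le]
    exact (hc₁.mono hsubτ).inv₀ (fun r hr => (hp₁ r (hsubτ hr)).ne')
  have hii₂ : IntervalIntegrable (fun r => (W₂ r)⁻¹) volume s τ := by
    apply ContinuousOn.intervalIntegrable
    rw [uIcc_of_le hsτ.le]
    exact (hc₂.mono hsubτ).inv₀ (fun r hr => (hp₂ r (hsubτ hr)).ne')
  have hdiff : (∫ r in s..τ, (W₁ r)⁻¹) - ∫ r in s..τ, (W₂ r)⁻¹
      = ∫ r in s..τ, ((W₁ r)⁻¹ - (W₂ r)⁻¹) :=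
    (intervalIntegral.integral_sub hii₁ hii₂).symm
  have e₁ := h₁ τ hτIcc
  have e₂ := h₂ τ hτIcc
  have hDτ : W₂ τ - W₁ τ
      = (y₂ - y₁) + a * ∫ r in s..τ, ((W₁ r)⁻¹ - (W₂ r)⁻¹) := by
    rw [e₁, e₂, ← hdiff]
    ring
  have := hτS.2
  rw [hDτ] at this
  nlinarith

end BesselAux

open BesselAux

/-- Left continuity of the hitting time of `0` of the real Bessel flow in the starting
point: `T^{s,y} → T^{s,x}` as `y ↑ x`, in the extended reals. -/
theorem real_bessel_hitting_time_left_continuous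
    (δ : ℝ) (hδ : δ < 0) (a : ℝ) (ha : a = (1 - δ) / 2)
    (b : ℝ → ℝ) (hb : ContinuousOn b (Set.Ici (0 : ℝ)))
    (s : ℝ) (hs : 0 ≤ s)
    (T : ℝ → EReal) (X : ℝ → ℝ → ℝ)
    (hflow : ∀ y : ℝ, 0 < y → IsMaxRealBesselSol a b s y (T y) (X y))
    (x : ℝ) (hx : 0 < x) :
    Tendsto T (𝓝[<] x) (𝓝 (T x)) := by
  have ha0 : (0:ℝ) < a := by rw [ha]; linarith
  set bt : ℝ → ℝ := fun t => b (max t 0) with hbt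
  have hbtc : Continuous bt :=
    hb.comp_continuous (continuous_id.max continuous_const)
      (fun t => mem_Ici.2 (le_max_right _ _))
  have hbt_eq : ∀ t : ℝ, 0 ≤ t → bt t = b t := fun t ht => by
    rw [hbt]; simp [max_eq_left ht]
  obtain ⟨hTx_gt, hXx_sol, hXx_max⟩ := hflow x hx
  rw [tendsto_order]
  constructor
  · -- lower semicontinuity
    intro c hc
    have hc' : max c (s : EReal) < T x := max_lt hc hTx_gt
    obtain ⟨z, hz1, hz2⟩ := exists_between hc'
    have hzt : z ≠ ⊤ := ne_top_of_lt hz2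
    have hzb : z ≠ ⊥ := ne_bot_of_gt hz1
    set t₀ := z.toReal with ht₀def
    have hzco : ((t₀ : ℝ) : EReal) = z := EReal.coe_toReal hzt hzb
    have hst₀ : s < t₀ := by
      have h1 : ((s:ℝ):EReal) < ((t₀:ℝ):EReal) := by
        rw [hzco]; exact lt_of_le_of_lt (le_max_right c (s:EReal)) hz1
      exact EReal.coe_lt_coe_iff.1 h1
    have hct₀ : c < ((t₀:ℝ):EReal) := by
      rw [hzco]; exact lt_of_le_of_lt (le_max_left c (s:EReal)) hz1
    have ht₀Tx : ((t₀:ℝ):EReal) < T x := by rw [hzco]; exact hz2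
    have hdom : Icc s t₀ ⊆ {t : ℝ | s ≤ t ∧ (t : EReal) < T x} := fun t ht =>
      ⟨ht.1, lt_of_le_of_lt (EReal.coe_le_coe_iff.2 ht.2) ht₀Tx⟩
    have hXxc : ContinuousOn (X x) (Icc s t₀) := hXx_sol.1.mono hdom
    have hXxpos : ∀ t ∈ Icc s t₀, 0 < X x t := fun t ht =>
      (hXx_sol.2 t ht.1 (hdom ht).2).1
    obtain ⟨r₀, hr₀, hr₀min⟩ := isCompact_Icc.exists_isMinOn
      (nonempty_Icc.2 hst₀.le) hXxc
    set m := X x r₀ with hmdef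
    have hm : 0 < m := hXxpos r₀ hr₀
    have hmge : ∀ t ∈ Icc s t₀, m ≤ X x t := fun t ht => hr₀min ht
    set c0 := m / 2 with hc0def
    have hc00 : 0 < c0 := by rw [hc0def]; linarith
    have hc0m : c0 < m := by rw [hc0def]; linarith
    set K : ℝ := (c0 ^ 2)⁻¹ with hKdef
    have hK0 : 0 ≤ K := by positivity
    set Ebd := Real.exp (a * K * (t₀ - s)) with hEdef
    have hE : 0 < Ebd := Real.exp_pos _
    set ε := c0 / Ebd with hεdef
    have hε : 0 < ε := by positivity
    have hy₀ : max (x - ε) 0 < x := max_lt (by linarith) hx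
    filter_upwards [Ioo_mem_nhdsLT_of_mem
      (⟨hy₀, le_refl x⟩ : x ∈ Ioc (max (x - ε) 0) x)] with y hy
    have hy0 : 0 < y := lt_of_le_of_lt (le_max_right (x - ε) 0) hy.1
    have hyx : y < x := hy.2
    have hxyε : x - y < ε := by
      have := lt_of_le_of_lt (le_max_left (x - ε) 0) hy.1; linarith
    obtain ⟨W, hWc, hWeq⟩ := exists_sol ha0.le hc00 hbtc s t₀ y hst₀.le
    have hXxeq' : ∀ t ∈ Icc s t₀,
        X x t = x + (bt t - bt s) - a * ∫ r in s..t, trunc c0 (X x r) := by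
      intro t ht
      have hInt : ∫ r in s..t, trunc c0 (X x r) = ∫ r in s..t, (X x r)⁻¹ := by
        apply intervalIntegral.integral_congr
        intro r hr
        rw [uIcc_of_le ht.1] at hr
        exact trunc_eq (le_trans hc0m.le
          (hmge r (Icc_subset_Icc le_rfl ht.2 hr)))
      rw [hInt, hbt_eq t (le_trans hs ht.1), hbt_eq s hs]
      exact (hXx_sol.2 t ht.1 (hdom ht).2).2
    have hgr := gronwall_int (K := K) ha0.le hK0 (trunc_continuous hc00)
      (trunc_lip hc00) (G := fun t => bt t - bt s) hXxc hWc hXxeq' hWeq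
    have hWlow : ∀ t ∈ Icc s t₀, c0 < W t := by
      intro t ht
      have h1 := hgr t ht
      have hle : Real.exp (a * K * (t - s)) ≤ Ebd := by
        rw [hEdef]
        apply Real.exp_le_exp.2
        apply mul_le_mul_of_nonneg_left _ (by positivity : (0:ℝ) ≤ a * K)
        linarith [ht.2]
      have h2 : |x - y| * Real.exp (a * K * (t - s)) < c0 := by
        rw [abs_of_pos (by linarith : (0:ℝ) < x - y)]
        calc (x - y) * Real.exp (a * K * (t - s)) ≤ (x - y) * Ebd := by nlinarith
          _ < ε * Ebd := by nlinarith
          _ = c0 := by rw [hεdef]; field_simp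
      have h3 : |X x t - W t| < c0 := lt_of_le_of_lt h1 h2
      have h4 := (abs_lt.1 h3).2
      have h5 := hmge t ht
      rw [hc0def] at *
      linarith
    have hsol' : IsRealBesselSol a b s y ((t₀ : ℝ) : EReal) W := by
      constructor
      · apply hWc.mono
        intro t ht
        exact ⟨ht.1, (EReal.coe_lt_coe_iff.1 ht.2).le⟩
      · intro t hts htT
        have ht₀' : t < t₀ := EReal.coe_lt_coe_iff.1 htT
        have htIcc : t ∈ Icc s t₀ := ⟨hts, ht₀'.le⟩
        refine ⟨lt_trans hc00 (hWlow t htIcc), ?_⟩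
        have heq := hWeq t htIcc
        rw [hbt_eq t (le_trans hs hts), hbt_eq s hs] at heq
        rw [heq]
        have hInt : ∫ r in s..t, trunc c0 (W r) = ∫ r in s..t, (W r)⁻¹ := by
          apply intervalIntegral.integral_congr
          intro r hr
          rw [uIcc_of_le hts] at hr
          exact trunc_eq (hWlow r (Icc_subset_Icc le_rfl ht₀'.le hr)).le
        rw [hInt]
    obtain ⟨hTy_gt, hXy_sol, hXy_max⟩ := hflow y hy0
    have hkey : ((t₀:ℝ):EReal) ≤ T y :=
      hXy_max _ W (EReal.coe_lt_coe_iff.2 hst₀) hsol'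
    exact lt_of_lt_of_le hct₀ hkey
  · -- upper semicontinuity: T is monotone
    intro c hc
    have hmono : ∀ y ∈ Ioo (0:ℝ) x, T y ≤ T x := by
      intro y hy
      by_contra hcon
      push_neg at hcon
      obtain ⟨hTy_gt, hXy_sol, hXy_max⟩ := hflow y hy.1
      have hTxt : T x ≠ ⊤ := ne_top_of_lt hcon
      have hTxb : T x ≠ ⊥ := ne_bot_of_gt hTx_gt
      set τ := (T x).toReal with hτdef
      have hτ : ((τ:ℝ):EReal) = T x := EReal.coe_toReal hTxt hTxb
      have hsτ : s < τ := by
        have : ((s:ℝ):EReal) < ((τ:ℝ):EReal) := by rw [hτ]; exact hTx_gt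
        exact EReal.coe_lt_coe_iff.1 this
      have hdomy : Icc s τ ⊆ {t : ℝ | s ≤ t ∧ (t : EReal) < T y} := fun t ht =>
        ⟨ht.1, lt_of_le_of_lt (le_trans (EReal.coe_le_coe_iff.2 ht.2) hτ.le) hcon⟩
      have hXyc : ContinuousOn (X y) (Icc s τ) := hXy_sol.1.mono hdomy
      have hXypos : ∀ t ∈ Icc s τ, 0 < X y t := fun t ht =>
        (hXy_sol.2 t ht.1 (hdomy ht).2).1
      obtain ⟨r₀, hr₀, hr₀min⟩ := isCompact_Icc.exists_isMinOn
        (nonempty_Icc.2 hsτ.le) hXyc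
      set m' := X y r₀ with hm'def
      have hm' : 0 < m' := hXypos r₀ hr₀
      have hm'ge : ∀ t ∈ Icc s τ, m' ≤ X y t := fun t ht => hr₀min ht
      have hdomx : Ico s τ ⊆ {t : ℝ | s ≤ t ∧ (t : EReal) < T x} := fun t ht =>
        ⟨ht.1, by rw [← hτ]; exact EReal.coe_lt_coe_iff.2 ht.2⟩
      have hcomp : ∀ t ∈ Ico s τ, X y t < X x t := by
        intro t ht
        have hsubt : Icc s t ⊆ Ico s τ := fun r hr => ⟨hr.1, lt_of_le_of_lt hr.2 ht.2⟩
        have hsubt' : Icc s t ⊆ Icc s τ := fun r hr => ⟨hr.1, hr.2.trans ht.2.le⟩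
        have h := comparison ha0 ht.1 hy.2 (G := fun r => b r - b s)
          (hXy_sol.1.mono (fun r hr => hdomy (hsubt' hr)))
          (hXx_sol.1.mono (fun r hr => hdomx (hsubt hr)))
          (fun r hr => (hXy_sol.2 r hr.1 (hdomy (hsubt' hr)).2).1)
          (fun r hr => (hXx_sol.2 r hr.1 (hdomx (hsubt hr)).2).1)
          (fun r hr => (hXy_sol.2 r hr.1 (hdomy (hsubt' hr)).2).2)
          (fun r hr => (hXx_sol.2 r hr.1 (hdomx (hsubt hr)).2).2)
        exact h t (right_mem_Icc.2 ht.1)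
      set c0 := m' / 2 with hc0def
      have hc00 : 0 < c0 := by rw [hc0def]; linarith
      have hc0m : c0 < m' := by rw [hc0def]; linarith
      obtain ⟨W, hWc, hWeq⟩ := exists_sol ha0.le hc00 hbtc s (τ + 1) x (by linarith)
      have hXxeq2 : ∀ t ∈ Ico s τ, ∀ r ∈ Icc s t,
          X x r = x + (bt r - bt s) - a * ∫ q in s..r, trunc c0 (X x q) := by
        intro t ht r hr
        have hrIco : r ∈ Ico s τ := ⟨hr.1, lt_of_le_of_lt hr.2 ht.2⟩
        have hInt : ∫ q in s..r, trunc c0 (X x q) = ∫ q in s..r, (X x q)⁻¹ := by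
          apply intervalIntegral.integral_congr
          intro q hq
          rw [uIcc_of_le hr.1] at hq
          have hqIco : q ∈ Ico s τ := ⟨hq.1, lt_of_le_of_lt hq.2 hrIco.2⟩
          apply trunc_eq
          calc c0 ≤ m' := hc0m.le
            _ ≤ X y q := hm'ge q ⟨hq.1, hqIco.2.le⟩
            _ ≤ X x q := (hcomp q hqIco).le
        rw [hInt, hbt_eq r (hs.trans hr.1), hbt_eq s hs]
        exact (hXx_sol.2 r hr.1 (hdomx hrIco).2).2
      have hWeqXx : ∀ t ∈ Ico s τ, W t = X x t := by
        intro t ht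
        have hsub : Icc s t ⊆ Icc s (τ + 1) :=
          Icc_subset_Icc le_rfl (by linarith [ht.2])
        have hgr := gronwall_int (K := (c0 ^ 2)⁻¹) ha0.le (by positivity)
          (trunc_continuous hc00) (trunc_lip hc00) (G := fun r => bt r - bt s)
          (hXx_sol.1.mono (fun r hr => hdomx ⟨hr.1, lt_of_le_of_lt hr.2 ht.2⟩))
          (hWc.mono hsub) (hXxeq2 t ht) (fun r hr => hWeq r (hsub hr))
        have h1 := hgr t (right_mem_Icc.2 ht.1)
        simp only [sub_self, abs_zero, zero_mul] at h1
        have := abs_nonpos_iff.1 h1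
        linarith [sub_eq_zero.1 this]
      have hWτ : m' ≤ W τ := by
        have h1 : ContinuousWithinAt W (Icc s (τ + 1)) τ :=
          hWc τ ⟨hsτ.le, by linarith⟩
        have hmono2 : 𝓝[Ico s τ] τ ≤ 𝓝[Icc s (τ + 1)] τ :=
          nhdsWithin_mono τ (fun r hr => ⟨hr.1, by linarith [hr.2]⟩)
        have htd : Tendsto W (𝓝[Ico s τ] τ) (𝓝 (W τ)) := h1.mono_left hmono2
        have hne : (𝓝[Ico s τ] τ).NeBot := by
          rw [← mem_closure_iff_nhdsWithin_neBot, closure_Ico hsτ.ne]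
          exact right_mem_Icc.2 hsτ.le
        apply ge_of_tendsto htd
        filter_upwards [eventually_mem_nhdsWithin] with t ht
        rw [hWeqXx t ht]
        calc m' ≤ X y t := hm'ge t ⟨ht.1, ht.2.le⟩
          _ ≤ X x t := (hcomp t ht).le
      have hWcτ : ContinuousWithinAt W (Icc s (τ + 1)) τ :=
        hWc τ ⟨hsτ.le, by linarith⟩
      have hev : ∀ᶠ t in 𝓝[Icc s (τ + 1)] τ, c0 < W t :=
        hWcτ.eventually (eventually_gt_nhds (lt_of_lt_of_le hc0m hWτ))
      rw [eventually_nhdsWithin_iff] at hev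
      obtain ⟨ε', hε', hball⟩ := Metric.eventually_nhds_iff.1 hev
      set η := min (ε' / 2) 1 with hηdef
      have hη0 : 0 < η := by apply lt_min (by linarith) one_pos
      have hη1 : η ≤ 1 := min_le_right _ _
      have hWpos2 : ∀ t, τ ≤ t → t ≤ τ + η → c0 < W t := by
        intro t h1 h2
        have hd : dist t τ < ε' := by
          rw [Real.dist_eq, abs_of_nonneg (by linarith)]
          have : η ≤ ε' / 2 := min_le_left _ _
          linarith
        exact hball hd ⟨by linarith, by linarith⟩
      have hWpos : ∀ t, s ≤ t → t < τ + η → c0 < W t := by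
        intro t h1 h2
        rcases lt_or_ge t τ with h | h
        · calc c0 < m' := hc0m
            _ ≤ X y t := hm'ge t ⟨h1, h.le⟩
            _ < X x t := hcomp t ⟨h1, h⟩
            _ = W t := (hWeqXx t ⟨h1, h⟩).symm
        · exact hWpos2 t h h2.le
      have hsol' : IsRealBesselSol a b s x ((τ + η : ℝ) : EReal) W := by
        constructor
        · apply hWc.mono
          intro t ht
          have := EReal.coe_lt_coe_iff.1 ht.2
          exact ⟨ht.1, by linarith⟩
        · intro t hts htT
          have ht' : t < τ + η := EReal.coe_lt_coe_iff.1 htT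
          refine ⟨lt_trans hc00 (hWpos t hts ht'), ?_⟩
          have hIcc : t ∈ Icc s (τ + 1) := ⟨hts, by linarith⟩
          have heq := hWeq t hIcc
          rw [hbt_eq t (hs.trans hts), hbt_eq s hs] at heq
          rw [heq]
          have hInt : ∫ r in s..t, trunc c0 (W r) = ∫ r in s..t, (W r)⁻¹ := by
            apply intervalIntegral.integral_congr
            intro r hr
            rw [uIcc_of_le hts] at hr
            exact trunc_eq (hWpos r hr.1 (lt_of_le_of_lt hr.2 ht')).le
          rw [hInt]
      have hle := hXx_max _ W (EReal.coe_lt_coe_iff.2 (by linarith : s < τ + η)) hsol'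
      rw [← hτ] at hle
      have := EReal.coe_le_coe_iff.1 hle
      linarith
    filter_upwards [Ioo_mem_nhdsLT_of_mem (⟨hx, le_refl x⟩ : x ∈ Ioc 0 x)] with y hy
    exact lt_of_le_of_lt (hmono y hy) hc
end
end
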